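/- arXiv:1303.4042 — 6 statements merged into one kernel-verified Lean document; each statement's English description precedes it below -/
import Mathlib

section
/- Let f ∈ L¹(ℝ) ∩ Lᵖ(ℝ) be a probability density for some p > 1, and define h(u) = (f(√u)+f(−√u))/(2√u) for u > 0, h(u) = 0 otherwise. Then for any p′ with 1 < p′ < 2p/(1+p), the function h belongs to L^{p′}(ℝ). -/
open MeasureTheory Set Real
open scoped ENNReal

section AuxPlaceholder
/-- Squaring maps `(0,∞)` onto itself. -/
lemma sq_image_Ioi : (fun x : ℝ => x ^ 2) '' Set.Ioi 0 = Set.Ioi 0 := by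
  ext u
  constructor
  · rintro ⟨x, hx, rfl⟩
    exact pow_pos (Set.mem_Ioi.mp hx) 2
  · intro hu
    exact ⟨Real.sqrt u, Real.sqrt_pos.2 hu, Real.sq_sqrt hu.le⟩

/-- Change of variables `u = x^2` for lintegrals on `(0,∞)`. -/
lemma cov_sq (G : ℝ → ℝ≥0∞) :
    ∫⁻ u in Set.Ioi (0:ℝ), G u
      = ∫⁻ x in Set.Ioi (0:ℝ), ENNReal.ofReal (2 * x) * G (x ^ 2) := by
  have hderiv : ∀ x ∈ Set.Ioi (0:ℝ),
      HasFDerivWithinAt (fun x : ℝ => x ^ 2)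
        ((1 : ℝ →L[ℝ] ℝ).smulRight (2 * x)) (Set.Ioi 0) x := by
    intro x _
    have h := (hasDerivAt_pow 2 x).hasDerivWithinAt (s := Set.Ioi (0:ℝ))
    have h2 : ((2:ℕ) : ℝ) * x ^ (2 - 1) = 2 * x := by norm_num
    rw [h2] at h
    exact h.hasFDerivWithinAt
  have hinj : Set.InjOn (fun x : ℝ => x ^ 2) (Set.Ioi 0) := by
    intro a ha b hb hab
    have : Real.sqrt (a ^ 2) = Real.sqrt (b ^ 2) := by
      simp only [] at hab; rw [hab]
    rwa [Real.sqrt_sq (le_of_lt ha), Real.sqrt_sq (le_of_lt hb)] at this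
  calc ∫⁻ u in Set.Ioi (0:ℝ), G u
      = ∫⁻ u in (fun x : ℝ => x ^ 2) '' Set.Ioi 0, G u := by rw [sq_image_Ioi]
    _ = ∫⁻ x in Set.Ioi (0:ℝ),
        ENNReal.ofReal |((1 : ℝ →L[ℝ] ℝ).smulRight (2 * x)).det| * G (x ^ 2) :=
        lintegral_image_eq_lintegral_abs_det_fderiv_mul volume measurableSet_Ioi hderiv hinj G
    _ = ∫⁻ x in Set.Ioi (0:ℝ), ENNReal.ofReal (2 * x) * G (x ^ 2) := by
        apply setLIntegral_congr_fun measurableSet_Ioi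
        intro x hx
        dsimp only
        rw [ContinuousLinearMap.det_smulRight, ContinuousLinearMap.one_apply, one_mul, abs_of_pos (by linarith [hx.out] : (0:ℝ) < 2 * x)]

/-- The key change-of-variable identity: substituting `u = x²`. -/
lemma cov_key (φ : ℝ → ℝ) :
    ∫⁻ u in Set.Ioi (0:ℝ), ENNReal.ofReal (φ (Real.sqrt u) * u ^ (-1/2 : ℝ))
      = 2 * ∫⁻ x in Set.Ioi (0:ℝ), ENNReal.ofReal (φ x) := by
  rw [cov_sq, ← lintegral_const_mul' 2 _ (by norm_num)]
  apply setLIntegral_congr_fun measurableSet_Ioi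
  intro x hx
  dsimp only
  have hx0 : (0:ℝ) < x := hx
  have h1 : Real.sqrt (x ^ 2) = x := Real.sqrt_sq hx0.le
  have h2 : (x ^ 2 : ℝ) ^ (-1/2 : ℝ) = x⁻¹ := by
    rw [← Real.rpow_natCast x 2, ← Real.rpow_mul hx0.le]
    norm_num [Real.rpow_neg_one]
  rw [h1, h2, ← ENNReal.ofReal_mul (by linarith : (0:ℝ) ≤ 2 * x)]
  have : 2 * x * (φ x * x⁻¹) = 2 * φ x := by field_simp
  rw [this, ENNReal.ofReal_mul (by norm_num : (0:ℝ) ≤ 2), ENNReal.ofReal_ofNat]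
end AuxPlaceholder

/-- If `f ∈ L¹ ∩ Lᵖ` is a probability density for some `p > 1` and
`h(u) = (f(√u)+f(−√u))/(2√u)` for `u > 0`, `h(u) = 0` otherwise, then `h ∈ L^{p'}`
for any `1 < p' < 2p/(1+p)`. -/
theorem h_extra_integrability
    (f : ℝ → ℝ) (hf_meas : Measurable f) (hf_nonneg : ∀ x, 0 ≤ f x)
    (hf_int : Integrable f) (hf_mass : ∫ x, f x = 1)
    (p : ℝ) (hp : 1 < p) (hfp : MemLp f (ENNReal.ofReal p))
    (h : ℝ → ℝ)
    (hh : ∀ u : ℝ, h u = if 0 < u then (f (Real.sqrt u) + f (-Real.sqrt u)) / (2 * Real.sqrt u)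
      else 0)
    (p' : ℝ) (hp'1 : 1 < p') (hp'2 : p' < 2 * p / (1 + p)) :
    MemLp h (ENNReal.ofReal p') := by
  have hp0 : (0:ℝ) < p := by linarith
  have hp'0 : (0:ℝ) < p' := by linarith
  have hp'p : p' < p := by
    have h2 : 2 * p / (1 + p) < p := by
      rw [div_lt_iff₀ (by linarith)]
      nlinarith
    linarith
  have hp'2' : p' * (1 + p) < 2 * p := by
    have := (lt_div_iff₀ (by linarith : (0:ℝ) < 1 + p)).1 hp'2
    linarith
  have msqrt : Measurable Real.sqrt := Real.continuous_sqrt.measurable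
  -- the symmetrized function g
  set g : ℝ → ℝ := fun x => f x + f (-x) with hg_def
  have hg_meas : Measurable g := hf_meas.add (hf_meas.comp measurable_neg)
  have hg_nonneg : ∀ x, 0 ≤ g x := fun x => add_nonneg (hf_nonneg x) (hf_nonneg _)
  have hg_p : MemLp g (ENNReal.ofReal p) :=
    hfp.add (hfp.comp_measurePreserving (Measure.measurePreserving_neg _))
  have hg_int : Integrable g := by
    have h1 : MemLp g 1 := (memLp_one_iff_integrable.2 hf_int).add
      (((memLp_one_iff_integrable.2 hf_int)).comp_measurePreserving
        (Measure.measurePreserving_neg (volume : Measure ℝ)))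
    exact memLp_one_iff_integrable.1 h1
  -- finiteness of basic lintegrals
  have Ig1 : ∫⁻ x, ENNReal.ofReal (g x) < ⊤ := hg_int.lintegral_lt_top
  have Igp : ∫⁻ x, ENNReal.ofReal (g x ^ p) < ⊤ := by
    have h0 : (ENNReal.ofReal p) ≠ 0 := by
      simp only [ne_eq, ENNReal.ofReal_eq_zero, not_le]; linarith
    have h1 := lintegral_rpow_enorm_lt_top_of_eLpNorm_lt_top h0 ENNReal.ofReal_ne_top hg_p.2
    rw [ENNReal.toReal_ofReal hp0.le] at h1
    refine lt_of_eq_of_lt ?_ h1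
    apply lintegral_congr
    intro x
    rw [← ENNReal.ofReal_rpow_of_nonneg (hg_nonneg x) hp0.le,
      ← Real.enorm_eq_ofReal (hg_nonneg x)]
  -- measurability and nonnegativity of h
  have hmeas : Measurable h := by
    have hrep : h = fun u => if 0 < u then
        (f (Real.sqrt u) + f (-Real.sqrt u)) / (2 * Real.sqrt u) else 0 := funext hh
    rw [hrep]
    refine Measurable.ite (measurableSet_lt measurable_const measurable_id) ?_ measurable_const
    exact ((hf_meas.comp msqrt).add
      (hf_meas.comp msqrt.neg)).div
      ((measurable_const.mul msqrt))
  have h_nonneg : ∀ u, 0 ≤ h u := by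
    intro u
    rw [hh u]
    split
    · exact div_nonneg (add_nonneg (hf_nonneg _) (hf_nonneg _))
        (by positivity)
    · exact le_refl 0
  refine ⟨hmeas.aestronglyMeasurable, ?_⟩
  have hq0 : (ENNReal.ofReal p') ≠ 0 := by
    simp only [ne_eq, ENNReal.ofReal_eq_zero, not_le]; linarith
  rw [eLpNorm_lt_top_iff_lintegral_rpow_enorm_lt_top hq0 ENNReal.ofReal_ne_top,
    ENNReal.toReal_ofReal hp'0.le]
  -- reduce to an integral over (0,∞)
  set ψ : ℝ → ℝ≥0∞ :=
    fun u => ENNReal.ofReal ((g (Real.sqrt u) / (2 * Real.sqrt u)) ^ p') with hψ_def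
  have hψ_meas : Measurable ψ :=
    ENNReal.measurable_ofReal.comp
      (((hg_meas.comp msqrt).div
        (measurable_const.mul msqrt)).pow measurable_const)
  have hpt : (fun u : ℝ => ‖h u‖ₑ ^ p') = (Set.Ioi (0:ℝ)).indicator ψ := by
    funext u
    by_cases hu : 0 < u
    · rw [Set.indicator_of_mem (show u ∈ Set.Ioi (0:ℝ) from hu)]
      rw [Real.enorm_eq_ofReal (h_nonneg u),
        ENNReal.ofReal_rpow_of_nonneg (h_nonneg u) hp'0.le]
      simp only [hψ_def]
      rw [hh u, if_pos hu]
    · rw [Set.indicator_of_notMem (by simpa using hu), hh u, if_neg hu]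
      simp [ENNReal.zero_rpow_of_pos hp'0]
  rw [hpt, lintegral_indicator measurableSet_Ioi]
  rw [← Set.Ioc_union_Ioi_eq_Ioi (zero_le_one : (0:ℝ) ≤ 1),
    lintegral_union measurableSet_Ioi (Set.Ioc_disjoint_Ioi le_rfl)]
  have IgpS : ∫⁻ x in Set.Ioi (0:ℝ), ENNReal.ofReal (g x ^ p) < ⊤ :=
    lt_of_le_of_lt (setLIntegral_le_lintegral _ _) Igp
  -- tail estimate
  have tail : ∫⁻ u in Set.Ioi (1:ℝ), ψ u < ⊤ := by
    have hb : ∀ u ∈ Set.Ioi (1:ℝ), ψ u ≤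
        ENNReal.ofReal ((g (Real.sqrt u) + g (Real.sqrt u) ^ p) * u ^ (-1/2 : ℝ)) := by
      intro u hu
      have hu1 : (1:ℝ) < u := hu
      have hu0 : (0:ℝ) < u := by linarith
      have hs1 : (1:ℝ) ≤ Real.sqrt u := by
        rw [show (1:ℝ) = Real.sqrt 1 by simp]
        exact Real.sqrt_le_sqrt hu1.le
      have hsq : (0:ℝ) < Real.sqrt u := by linarith
      set t := g (Real.sqrt u) with ht_def
      have ht0 : (0:ℝ) ≤ t := hg_nonneg _
      apply ENNReal.ofReal_le_ofReal
      have e2 : Real.sqrt u ≤ (2 * Real.sqrt u) ^ p' := by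
        calc Real.sqrt u ≤ 2 * Real.sqrt u := by linarith
          _ = (2 * Real.sqrt u) ^ (1:ℝ) := (Real.rpow_one _).symm
          _ ≤ (2 * Real.sqrt u) ^ p' :=
              Real.rpow_le_rpow_of_exponent_le (by linarith) hp'1.le
      have e3 : t ^ p' ≤ t + t ^ p := by
        rcases le_or_gt t 1 with h1 | h1
        · have h2 : t ^ p' ≤ t ^ (1:ℝ) :=
            Real.rpow_le_rpow_of_exponent_ge' ht0 h1 zero_le_one hp'1.le
          rw [Real.rpow_one] at h2
          have h3 : (0:ℝ) ≤ t ^ p := Real.rpow_nonneg ht0 p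
          linarith
        · have h2 : t ^ p' ≤ t ^ p :=
            Real.rpow_le_rpow_of_exponent_le h1.le hp'p.le
          linarith
      calc (t / (2 * Real.sqrt u)) ^ p'
          = t ^ p' / (2 * Real.sqrt u) ^ p' := Real.div_rpow ht0 (by positivity : (0:ℝ) ≤ 2 * Real.sqrt u) p'
        _ ≤ (t + t ^ p) / Real.sqrt u := by
            apply div_le_div₀ (by positivity) e3 hsq e2
        _ = (t + t ^ p) * u ^ (-1/2 : ℝ) := by
            rw [div_eq_mul_inv]
            congr 1
            rw [Real.sqrt_eq_rpow, ← Real.rpow_neg hu0.le]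
            norm_num
    calc ∫⁻ u in Set.Ioi (1:ℝ), ψ u
        ≤ ∫⁻ u in Set.Ioi (1:ℝ),
            ENNReal.ofReal ((g (Real.sqrt u) + g (Real.sqrt u) ^ p) * u ^ (-1/2 : ℝ)) := by
          apply setLIntegral_mono
          · exact ENNReal.measurable_ofReal.comp
              (((hg_meas.comp msqrt).add
                ((hg_meas.comp msqrt).pow measurable_const)).mul
                (measurable_id.pow measurable_const))
          · exact hb
      _ ≤ ∫⁻ u in Set.Ioi (0:ℝ),
            ENNReal.ofReal ((g (Real.sqrt u) + g (Real.sqrt u) ^ p) * u ^ (-1/2 : ℝ)) :=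
          lintegral_mono_set (Set.Ioi_subset_Ioi zero_le_one)
      _ = 2 * ∫⁻ x in Set.Ioi (0:ℝ), ENNReal.ofReal (g x + g x ^ p) :=
          cov_key (fun x => g x + g x ^ p)
      _ < ⊤ := by
          apply ENNReal.mul_lt_top (by norm_num)
          calc ∫⁻ x in Set.Ioi (0:ℝ), ENNReal.ofReal (g x + g x ^ p)
              = ∫⁻ x in Set.Ioi (0:ℝ),
                  (ENNReal.ofReal (g x) + ENNReal.ofReal (g x ^ p)) := by
                apply lintegral_congr
                intro x
                rw [ENNReal.ofReal_add (hg_nonneg x) (Real.rpow_nonneg (hg_nonneg x) p)]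
            _ = (∫⁻ x in Set.Ioi (0:ℝ), ENNReal.ofReal (g x))
                + ∫⁻ x in Set.Ioi (0:ℝ), ENNReal.ofReal (g x ^ p) :=
                lintegral_add_left (ENNReal.measurable_ofReal.comp hg_meas) _
            _ < ⊤ := ENNReal.add_lt_top.2
                ⟨lt_of_le_of_lt (setLIntegral_le_lintegral _ _) Ig1, IgpS⟩
  -- near-zero estimate via Hölder
  have near : ∫⁻ u in Set.Ioc (0:ℝ) 1, ψ u < ⊤ := by
    set a := p / p' with ha_def
    set b := p / (p - p') with hb_def
    have ha1 : 1 < a := by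
      rw [ha_def, lt_div_iff₀ hp'0]; linarith
    have ha0 : 0 < a := by linarith
    have hab : Real.HolderConjugate a b := by
      constructor
      · rw [ha_def, hb_def]
        rw [inv_div, inv_div]
        rw [← add_div, inv_one, div_eq_one_iff_eq hp0.ne']
        ring
      · exact ha0
      · rw [hb_def]; exact div_pos hp0 (by linarith)
    set A : ℝ → ℝ≥0∞ :=
      fun u => ENNReal.ofReal (g (Real.sqrt u) ^ p' * u ^ (-(p'/(2*p)))) with hA_def
    set B : ℝ → ℝ≥0∞ := fun u => ENNReal.ofReal (u ^ (p'/(2*p) - p'/2)) with hB_def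
    have mA : Measurable A :=
      ENNReal.measurable_ofReal.comp
        (((hg_meas.comp msqrt).pow measurable_const).mul
          (measurable_id.pow measurable_const))
    have mB : Measurable B :=
      ENNReal.measurable_ofReal.comp (measurable_id.pow measurable_const)
    have hbound : ∀ u ∈ Set.Ioc (0:ℝ) 1, ψ u ≤ (A * B) u := by
      intro u hu
      have hu0 : (0:ℝ) < u := hu.1
      have hsq : (0:ℝ) < Real.sqrt u := Real.sqrt_pos.2 hu0
      show ψ u ≤ A u * B u
      simp only [hψ_def, hA_def, hB_def]
      set t := g (Real.sqrt u) with ht_def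
      have ht0 : (0:ℝ) ≤ t := hg_nonneg _
      have st1 : t / (2 * Real.sqrt u) ≤ t / Real.sqrt u := by
        gcongr
        linarith
      have st2 : (t / Real.sqrt u) ^ p' = t ^ p' * u ^ (-(p'/2)) := by
        rw [Real.div_rpow ht0 (Real.sqrt_nonneg u) p', Real.sqrt_eq_rpow,
          ← Real.rpow_mul hu0.le, div_eq_mul_inv, ← Real.rpow_neg hu0.le]
        ring_nf
      have st3 : u ^ (-(p'/2) : ℝ) = u ^ (-(p'/(2*p))) * u ^ (p'/(2*p) - p'/2) := by
        rw [← Real.rpow_add hu0]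
        congr 1
        ring
      have key0 : (t / (2 * Real.sqrt u)) ^ p'
          ≤ t ^ p' * u ^ (-(p'/(2*p))) * (u ^ (p'/(2*p) - p'/2)) := by
        calc (t / (2 * Real.sqrt u)) ^ p' ≤ (t / Real.sqrt u) ^ p' :=
              Real.rpow_le_rpow (by positivity) st1 hp'0.le
          _ = t ^ p' * u ^ (-(p'/2)) := st2
          _ = t ^ p' * u ^ (-(p'/(2*p))) * (u ^ (p'/(2*p) - p'/2)) := by
              rw [st3]; ring
      rw [← ENNReal.ofReal_mul
        (mul_nonneg (Real.rpow_nonneg ht0 _) (Real.rpow_nonneg hu0.le _))]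
      exact ENNReal.ofReal_le_ofReal key0
    have hApart : ∫⁻ u in Set.Ioc (0:ℝ) 1, A u ^ a < ⊤ := by
      have e : ∀ u ∈ Set.Ioi (0:ℝ), A u ^ a
          = ENNReal.ofReal (g (Real.sqrt u) ^ p * u ^ (-1/2 : ℝ)) := by
        intro u hu
        have hu0 : (0:ℝ) < u := hu
        simp only [hA_def]
        rw [ENNReal.ofReal_rpow_of_nonneg
          (mul_nonneg (Real.rpow_nonneg (hg_nonneg _) _) (Real.rpow_nonneg hu0.le _)) ha0.le]
        congr 1
        rw [Real.mul_rpow (Real.rpow_nonneg (hg_nonneg _) _) (Real.rpow_nonneg hu0.le _),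
          ← Real.rpow_mul (hg_nonneg _), ← Real.rpow_mul hu0.le]
        congr 1
        · congr 1
          rw [ha_def]; field_simp
        · congr 1
          rw [ha_def]; field_simp
      calc ∫⁻ u in Set.Ioc (0:ℝ) 1, A u ^ a
          ≤ ∫⁻ u in Set.Ioi (0:ℝ), A u ^ a := lintegral_mono_set Set.Ioc_subset_Ioi_self
        _ = ∫⁻ u in Set.Ioi (0:ℝ),
              ENNReal.ofReal (g (Real.sqrt u) ^ p * u ^ (-1/2 : ℝ)) :=
            setLIntegral_congr_fun measurableSet_Ioi e
        _ = 2 * ∫⁻ x in Set.Ioi (0:ℝ), ENNReal.ofReal (g x ^ p) :=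
            cov_key (fun x => g x ^ p)
        _ < ⊤ := ENNReal.mul_lt_top (by norm_num) IgpS
    have hc1 : p' * (p - 1) / (2 * (p - p')) < 1 := by
      rw [div_lt_one (by linarith)]
      nlinarith
    have hc0 : -1 < -(p' * (p - 1) / (2 * (p - p'))) := by linarith
    have hb0 : 0 < b := by
      rw [hb_def]; exact div_pos hp0 (by linarith)
    have hBpart : ∫⁻ u in Set.Ioc (0:ℝ) 1, B u ^ b < ⊤ := by
      have e : ∀ u ∈ Set.Ioc (0:ℝ) 1, B u ^ b
          = ENNReal.ofReal (u ^ (-(p' * (p - 1) / (2 * (p - p'))))) := by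
        intro u hu
        simp only [hB_def]
        rw [ENNReal.ofReal_rpow_of_nonneg (Real.rpow_nonneg hu.1.le _) hb0.le,
          ← Real.rpow_mul hu.1.le]
        congr 2
        rw [hb_def]
        have h1 : p ≠ 0 := hp0.ne'
        have h2 : p - p' ≠ 0 := ne_of_gt (by linarith)
        field_simp
        ring
      rw [setLIntegral_congr_fun measurableSet_Ioc e,
        ← Measure.restrict_congr_set Ioo_ae_eq_Ioc]
      have hInt : IntegrableOn
          (fun u : ℝ => u ^ (-(p' * (p - 1) / (2 * (p - p'))))) (Set.Ioo 0 1) :=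
        (intervalIntegral.integrableOn_Ioo_rpow_iff zero_lt_one).2 hc0
      exact hInt.lintegral_lt_top
    calc ∫⁻ u in Set.Ioc (0:ℝ) 1, ψ u
        ≤ ∫⁻ u in Set.Ioc (0:ℝ) 1, (A * B) u := setLIntegral_mono (mA.mul mB) hbound
      _ ≤ (∫⁻ u in Set.Ioc (0:ℝ) 1, A u ^ a) ^ (1/a)
          * (∫⁻ u in Set.Ioc (0:ℝ) 1, B u ^ b) ^ (1/b) :=
          ENNReal.lintegral_mul_le_Lp_mul_Lq _ hab mA.aemeasurable mB.aemeasurable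
      _ < ⊤ := ENNReal.mul_lt_top
          (ENNReal.rpow_lt_top_of_nonneg (one_div_nonneg.2 ha0.le) hApart.ne)
          (ENNReal.rpow_lt_top_of_nonneg (one_div_nonneg.2 hb0.le) hBpart.ne)
  exact ENNReal.add_lt_top.2 ⟨near, tail⟩
end

section
/- Let g : ℝ \ {0} → ℝ be continuous and suppose that for every x ≠ 0, g(x/n) → 0 as n → ∞ (n ranging over positive integers). Then g(x) → 0 as x → 0. -/
open Filter Topology Set

lemma aux_right_tendsto
    (g : ℝ → ℝ) (hg : ContinuousOn g {0}ᶜ)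
    (h : ∀ x : ℝ, x ≠ 0 → Tendsto (fun n : ℕ => g (x / n)) atTop (𝓝 0)) :
    Tendsto g (𝓝[>] (0:ℝ)) (𝓝 0) := by
  rw [Metric.tendsto_nhdsWithin_nhds]
  intro ε hε
  -- Key claim: an interval (a,b) with 0 < a on which all tails are uniformly small
  have key : ∃ a b : ℝ, 0 < a ∧ a < b ∧ ∃ N : ℕ,
      ∀ y : ℝ, a < y → y < b → ∀ n : ℕ, N + 1 ≤ n → |g (y / n)| ≤ ε / 2 := by
    haveI : Nonempty (Set.Icc (1:ℝ) 2) := ⟨⟨1, by norm_num⟩⟩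
    haveI : CompleteSpace (Set.Icc (1:ℝ) 2) := isClosed_Icc.completeSpace_coe
    set f : ℕ → Set (Set.Icc (1:ℝ) 2) :=
      fun N => {p | ∀ n : ℕ, N + 1 ≤ n → |g ((p : ℝ) / (n : ℝ))| ≤ ε / 2} with hf
    have hfc : ∀ N, IsClosed (f N) := by
      intro N
      have : f N = ⋂ n ∈ Set.Ici (N + 1), {p : Set.Icc (1:ℝ) 2 | |g ((p : ℝ) / (n:ℝ))| ≤ ε / 2} := by
        ext p; simp [hf, Set.mem_Ici]
      rw [this]
      refine isClosed_biInter fun n hn => ?_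
      have hn1 : 1 ≤ n := le_trans (Nat.le_add_left 1 N) hn
      have hcont : Continuous fun p : Set.Icc (1:ℝ) 2 => g ((p : ℝ) / (n:ℝ)) := by
        apply hg.comp_continuous (continuous_subtype_val.div_const _)
        intro p
        have h1 : (1:ℝ) ≤ (p : ℝ) := p.2.1
        have hn' : (0:ℝ) < (n:ℝ) := by exact_mod_cast hn1
        simp only [Set.mem_compl_iff, Set.mem_singleton_iff]
        exact ne_of_gt (div_pos (lt_of_lt_of_le one_pos h1) hn')
      exact isClosed_le (continuous_abs.comp hcont) continuous_const
    have hU : ⋃ N, f N = Set.univ := by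
      ext p
      simp only [Set.mem_iUnion, Set.mem_univ, iff_true]
      have hp0 : (p : ℝ) ≠ 0 := ne_of_gt (lt_of_lt_of_le one_pos p.2.1)
      have hev : ∀ᶠ n : ℕ in atTop, |g ((p : ℝ) / n) - 0| < ε / 2 :=
        (h (p : ℝ) hp0).eventually (eventually_abs_sub_lt 0 (half_pos hε))
      obtain ⟨N, hN⟩ := eventually_atTop.mp hev
      refine ⟨N, fun n hn => ?_⟩
      have := hN n (le_trans (Nat.le_succ N) hn)
      rw [sub_zero] at this
      exact this.le
    obtain ⟨N, pN, hpN⟩ := nonempty_interior_of_iUnion_of_closed hfc hU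
    have hmem : f N ∈ 𝓝 pN := mem_interior_iff_mem_nhds.mp hpN
    rw [nhds_subtype_eq_comap, Filter.mem_comap] at hmem
    obtain ⟨t, ht, hts⟩ := hmem
    rw [Metric.mem_nhds_iff] at ht
    obtain ⟨δ, hδ, hball⟩ := ht
    set x : ℝ := (pN : ℝ) with hx
    have hx1 : (1:ℝ) ≤ x := pN.2.1
    have hx2 : x ≤ 2 := pN.2.2
    refine ⟨max (x - δ/2) 1, min (x + δ/2) 2,
      lt_of_lt_of_le one_pos (le_max_right _ _), ?_, N, ?_⟩
    · rw [max_lt_iff, lt_min_iff, lt_min_iff]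
      refine ⟨⟨by linarith, by linarith⟩, ⟨by linarith, by linarith⟩⟩
    · intro y hay hby n hn
      rw [max_lt_iff] at hay
      rw [lt_min_iff] at hby
      have hy1 : (1:ℝ) ≤ y := hay.2.le
      have hy2 : y ≤ 2 := hby.2.le
      have hyb : y ∈ Metric.ball x δ := by
        rw [Metric.mem_ball, Real.dist_eq, abs_lt]
        constructor <;> [linarith [hay.1]; linarith [hby.1]]
      have hyf : (⟨y, ⟨hy1, hy2⟩⟩ : Set.Icc (1:ℝ) 2) ∈ f N := hts (hball hyb)
      exact hyf n hn
  obtain ⟨a, b, ha, hab, N, hN⟩ := key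
  refine ⟨min (b - a) (a / (N + 2)), lt_min (by linarith) (by positivity), ?_⟩
  intro y hy hdist
  have hy0 : 0 < y := hy
  have hyd : y < min (b - a) (a / (N + 2)) := by
    rwa [Real.dist_eq, sub_zero, abs_of_pos hy0] at hdist
  set n : ℕ := ⌊a / y⌋₊ + 1 with hn
  have h1 : a / y < (n : ℝ) := by
    rw [hn]; push_cast; exact Nat.lt_floor_add_one _
  have hny : a < n * y := (div_lt_iff₀ hy0).mp h1
  have h2 : (n : ℝ) ≤ a / y + 1 := by
    have := Nat.floor_le (by positivity : (0:ℝ) ≤ a / y)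
    rw [hn]; push_cast; linarith
  have hnyb : (n : ℝ) * y < b := by
    have hm : (n : ℝ) * y ≤ (a / y + 1) * y := mul_le_mul_of_nonneg_right h2 hy0.le
    have hfe : (a / y + 1) * y = a + y := by field_simp
    have hyba : y < b - a := lt_of_lt_of_le hyd (min_le_left _ _)
    linarith
  have hnN : N + 1 ≤ n := by
    have hya : y < a / (N + 2) := lt_of_lt_of_le hyd (min_le_right _ _)
    have hN2 : (0:ℝ) < (N:ℝ) + 2 := by positivity
    have : ((N:ℝ) + 2) < a / y := by
      rw [lt_div_iff₀ hy0]
      calc ((N:ℝ) + 2) * y < ((N:ℝ) + 2) * (a / ((N:ℝ)+2)) := by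
            exact mul_lt_mul_of_pos_left (by exact_mod_cast hya) hN2
        _ = a := by field_simp
    have hfl : N + 2 ≤ ⌊a / y⌋₊ := Nat.le_floor (by push_cast; linarith)
    omega
  have hn0 : (n : ℝ) ≠ 0 := Nat.cast_ne_zero.mpr (Nat.succ_ne_zero _)
  have hbound := hN ((n : ℝ) * y) hny hnyb n hnN
  rw [mul_div_cancel_left₀ y hn0] at hbound
  rw [Real.dist_eq, sub_zero]
  linarith

/-- If `g` is continuous on `ℝ \ {0}` and `g(x/n) → 0` as `n → ∞` for every `x ≠ 0`,
then `g(x) → 0` as `x → 0`. -/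
theorem tendsto_zero_of_tendsto_along_divisions
    (g : ℝ → ℝ) (hg : ContinuousOn g {0}ᶜ)
    (h : ∀ x : ℝ, x ≠ 0 → Tendsto (fun n : ℕ => g (x / n)) atTop (𝓝 0)) :
    Tendsto g (𝓝[≠] 0) (𝓝 0) := by
  have hright : Tendsto g (𝓝[>] (0:ℝ)) (𝓝 0) := aux_right_tendsto g hg h
  have hleft : Tendsto g (𝓝[<] (0:ℝ)) (𝓝 0) := by
    set g' : ℝ → ℝ := fun x => g (-x) with hg'def
    have hg' : ContinuousOn g' {0}ᶜ := by
      apply hg.comp continuous_neg.continuousOn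
      intro x hx
      simp only [Set.mem_compl_iff, Set.mem_singleton_iff] at hx ⊢
      exact neg_ne_zero.mpr hx
    have h' : ∀ x : ℝ, x ≠ 0 → Tendsto (fun n : ℕ => g' (x / n)) atTop (𝓝 0) := by
      intro x hx
      have := h (-x) (neg_ne_zero.mpr hx)
      simpa [hg'def, neg_div] using this
    have haux := aux_right_tendsto g' hg' h'
    have hneg : Tendsto (fun x : ℝ => -x) (𝓝[<] (0:ℝ)) (𝓝[>] (0:ℝ)) := by
      have := tendsto_neg_nhdsLT (a := (0:ℝ))
      simpa using this
    have := haux.comp hneg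
    simpa only [hg'def, Function.comp_def, neg_neg] using this
  rw [← nhdsLT_sup_nhdsGT (0:ℝ), tendsto_sup]
  exact ⟨hleft, hright⟩
end

section
/- Let ĝ : ℝ → ℂ be continuous with ĝ(0) = 1, |ĝ(ξ)| ≤ 1 for all ξ, and suppose there exist σ > 0, 1 < α < 2, β ∈ ℝ such that for every ξ ≠ 0, n·(ĝ(ξ/n^{1/α}) − 1) → −σ|ξ|^α (1 + iβ·sgn(ξ)·tan(πα/2)) as n → ∞. Then the function η(ξ) := ĝ(ξ) − 1 + σ|ξ|^α (1 + iβ·sgn(ξ)·tan(πα/2)) satisfies: η(ξ)/|ξ|^α is bounded on ℝ \ {0} and η(ξ)/|ξ|^α → 0 as ξ → 0. -/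
open Filter Topology Real

open Set in
lemma croft (α : ℝ) (hα : 0 < α) (G : ℝ → ℂ) (hG : ContinuousOn G (Set.Ioi 0)) (L : ℂ)
    (h : ∀ ξ : ℝ, 0 < ξ →
      Tendsto (fun n : ℕ => G (ξ * ((n : ℝ) + 1) ^ (-(1/α)))) atTop (𝓝 L)) :
    Tendsto G (𝓝[>] (0:ℝ)) (𝓝 L) := by
  set r : ℕ → ℝ := fun n => ((n : ℝ) + 1) ^ (-(1/α)) with hr
  have hrpos : ∀ n, 0 < r n := fun n => rpow_pos_of_pos (by positivity) _
  have hranti : ∀ m n : ℕ, m ≤ n → r n ≤ r m := by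
    intro m n hmn
    have hc : ((m:ℝ) + 1) ≤ ((n:ℝ) + 1) := by
      have := (Nat.cast_le (α := ℝ)).mpr hmn; linarith
    have he : -(1/α) ≤ 0 := by
      have : 0 < 1/α := by positivity
      linarith
    exact rpow_le_rpow_of_nonpos (by positivity) hc he
  have hrlim : Tendsto r atTop (𝓝 0) := by
    have h1 : Tendsto (fun n : ℕ => (n : ℝ) + 1) atTop atTop :=
      tendsto_atTop_add_const_right _ _ tendsto_natCast_atTop_atTop
    exact (tendsto_rpow_neg_atTop (by positivity)).comp h1
  rw [Metric.tendsto_nhdsWithin_nhds]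
  intro ε hε
  haveI : Nonempty ↥(Icc (1:ℝ) 2) := ⟨⟨1, by norm_num⟩⟩
  set E : ℕ → Set ↥(Icc (1:ℝ) 2) :=
    fun k => {x | ∀ n, dist (G ((x : ℝ) * r (n + k))) L ≤ ε / 2} with hE
  have hclosed : ∀ k, IsClosed (E k) := by
    intro k
    have hEeq : E k = ⋂ n, (fun x : ↥(Icc (1:ℝ) 2) =>
        dist (G ((x : ℝ) * r (n + k))) L) ⁻¹' Iic (ε/2) := by
      ext x; simp only [hE, Set.mem_setOf_eq, Set.mem_iInter, Set.mem_preimage, Set.mem_Iic]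
    rw [hEeq]
    refine isClosed_iInter fun n => IsClosed.preimage ?_ isClosed_Iic
    have hc1 : Continuous fun x : ↥(Icc (1:ℝ) 2) => (x : ℝ) * r (n + k) :=
      continuous_subtype_val.mul continuous_const
    have hmaps : ∀ x : ↥(Icc (1:ℝ) 2), (x : ℝ) * r (n + k) ∈ Ioi (0:ℝ) := by
      intro x
      have h1 : (1:ℝ) ≤ (x:ℝ) := x.2.1
      exact mul_pos (by linarith) (hrpos _)
    exact (Continuous.dist (hG.comp_continuous hc1 hmaps) continuous_const)
  have hcover : ⋃ k, E k = univ := by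
    ext x
    simp only [Set.mem_iUnion, Set.mem_univ, iff_true]
    have hx1 : (0:ℝ) < (x:ℝ) := lt_of_lt_of_le one_pos x.2.1
    have hev := (h (x:ℝ) hx1).eventually (Metric.ball_mem_nhds L (by positivity : (0:ℝ) < ε/2))
    rw [eventually_atTop] at hev
    obtain ⟨k, hk⟩ := hev
    refine ⟨k, fun n => le_of_lt ?_⟩
    have := hk (n + k) (Nat.le_add_left _ _)
    simpa [Metric.mem_ball, hr] using this
  obtain ⟨k, x₀, hx₀⟩ := nonempty_interior_of_iUnion_of_closed hclosed hcover
  obtain ⟨s, hs, hball⟩ := Metric.mem_nhds_iff.mp (mem_interior_iff_mem_nhds.mp hx₀)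
  set x : ℝ := (x₀ : ℝ) with hxdef
  have hx12 : x ∈ Icc (1:ℝ) 2 := x₀.2
  set a : ℝ := max (x - s/3) 1 with ha
  set b : ℝ := min (x + s/3) 2 with hb
  have ha1 : (1:ℝ) ≤ a := le_max_right _ _
  have hax : a ≤ x := max_le (by linarith) hx12.1
  have hxb : x ≤ b := le_min (by linarith) hx12.2
  have hb2 : b ≤ 2 := min_le_right _ _
  have hab : a < b := by
    by_contra h'
    push_neg at h'
    have h1 : a = x := le_antisymm hax (hxb.trans h')
    have h2 : x = b := le_antisymm hxb (h'.trans hax)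
    have h3 : x = 1 := by
      rcases max_choice (x - s/3) 1 with hm | hm
      · rw [ha, hm] at h1; linarith
      · rw [ha, hm] at h1; linarith
    have h4 : x = 2 := by
      rcases min_choice (x + s/3) 2 with hm | hm
      · rw [hb, hm] at h2; linarith
      · rw [hb, hm] at h2; linarith
    linarith
  have hkey : ∀ ξ : ℝ, a ≤ ξ → ξ ≤ b → ∀ n, dist (G (ξ * r (n + k))) L ≤ ε / 2 := by
    intro ξ haξ hξb n
    have hξmem : ξ ∈ Icc (1:ℝ) 2 := ⟨le_trans ha1 haξ, le_trans hξb hb2⟩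
    have hdist : dist (⟨ξ, hξmem⟩ : ↥(Icc (1:ℝ) 2)) x₀ < s := by
      rw [Subtype.dist_eq, Real.dist_eq]
      have h1 : x - s/3 ≤ a := le_max_left _ _
      have h2 : b ≤ x + s/3 := min_le_left _ _
      rw [abs_lt]; constructor <;> [linarith; linarith]
    exact hball hdist n
  -- overlap: eventually a * r n ≤ b * r (n+1)
  have hq : Tendsto (fun n : ℕ => b * (r (n+1) / r n)) atTop (𝓝 b) := by
    have hq1 : Tendsto (fun n : ℕ => r (n+1) / r n) atTop (𝓝 1) := by
      have heq : ∀ n : ℕ, r (n+1) / r n = (((n:ℝ)+2)/((n:ℝ)+1)) ^ (-(1/α)) := by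
        intro n
        rw [hr]
        simp only
        rw [Real.div_rpow (by positivity) (by positivity)]
        push_cast; ring_nf
      rw [show (1:ℝ) = (1:ℝ) ^ (-(1/α)) by rw [one_rpow]]
      refine Tendsto.congr (fun n => (heq n).symm) (Tendsto.rpow_const ?_ (Or.inl one_ne_zero))
      have : Tendsto (fun n : ℕ => 1 + 1/((n:ℝ)+1)) atTop (𝓝 (1 + 0)) := by
        refine tendsto_const_nhds.add ?_
        exact tendsto_one_div_add_atTop_nhds_zero_nat.comp (tendsto_add_atTop_nat 0) |>.congr (by simp)
      refine Tendsto.congr (fun n => ?_) (by simpa using this)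
      field_simp
      ring
    simpa using tendsto_const_nhds.mul hq1
  have hev2 : ∀ᶠ n in atTop, a * r n ≤ b * r (n+1) := by
    have hev := hq.eventually (eventually_gt_nhds hab)
    refine hev.mono fun n hn => ?_
    have hrn : 0 < r n := hrpos n
    have : a * r n < b * (r (n+1) / r n) * r n := by
      exact (mul_lt_mul_iff_left₀ hrn).mpr hn
    calc a * r n ≤ b * (r (n+1) / r n) * r n := this.le
      _ = b * r (n+1) := by field_simp
  rw [eventually_atTop] at hev2
  obtain ⟨N₀, hN₀⟩ := hev2
  set N : ℕ := max N₀ k with hN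
  refine ⟨a * r N, mul_pos (by linarith) (hrpos N), ?_⟩
  intro t ht hdist
  have htpos : 0 < t := ht
  have htlt : t < a * r N := by
    rwa [Real.dist_eq, sub_zero, abs_of_pos htpos] at hdist
  have hPex : ∃ n, a * r n ≤ t := by
    have hev3 : ∀ᶠ n in atTop, a * r n < t := by
      have h5 : Tendsto (fun n : ℕ => a * r n) atTop (𝓝 (a * 0)) := tendsto_const_nhds.mul hrlim
      rw [mul_zero] at h5
      exact h5.eventually (eventually_lt_nhds htpos)
    obtain ⟨n, hn⟩ := hev3.exists
    exact ⟨n, hn.le⟩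
  classical
  set n₀ := Nat.find hPex with hn₀def
  have hspec : a * r n₀ ≤ t := Nat.find_spec hPex
  have hmin : ∀ m, m < n₀ → ¬ (a * r m ≤ t) := fun m hm => Nat.find_min hPex hm
  have hn₀N : N < n₀ := by
    by_contra hc
    push_neg at hc
    have h6 : r N ≤ r n₀ := hranti n₀ N hc
    have h7 : a * r N ≤ a * r n₀ := by nlinarith
    linarith
  have hprev : t < a * r (n₀ - 1) := lt_of_not_ge (hmin (n₀-1) (by omega))
  have hover : a * r (n₀ - 1) ≤ b * r n₀ := by
    have h8 := hN₀ (n₀ - 1) (by omega)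
    rwa [show n₀ - 1 + 1 = n₀ by omega] at h8
  have htb : t ≤ b * r n₀ := le_of_lt (lt_of_lt_of_le hprev hover)
  have hrn₀ : 0 < r n₀ := hrpos n₀
  set ξ : ℝ := t / r n₀ with hξ
  have haξ : a ≤ ξ := (le_div_iff₀ hrn₀).mpr hspec
  have hξb : ξ ≤ b := (div_le_iff₀ hrn₀).mpr htb
  obtain ⟨m, hm⟩ : ∃ m, n₀ = m + k := ⟨n₀ - k, by omega⟩
  have h9 := hkey ξ haξ hξb m
  rw [← hm] at h9
  have hξt : ξ * r n₀ = t := div_mul_cancel₀ t (ne_of_gt hrn₀)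
  rw [hξt] at h9
  linarith

/-- NDA implies FDA: if the characteristic function `gHat` satisfies the NDA limit condition
for an α-stable law, then the remainder `η(ξ) = gHat(ξ) − 1 + σ|ξ|^α(1+iβ sgn(ξ) tan(πα/2))`
satisfies `η(ξ)/|ξ|^α` bounded and tending to `0` as `ξ → 0`. -/
theorem nda_implies_fda
    (gHat : ℝ → ℂ) (hcont : Continuous gHat) (h0 : gHat 0 = 1) (hbdd : ∀ ξ, ‖gHat ξ‖ ≤ 1)
    (σ α β : ℝ) (hσ : 0 < σ) (hα1 : 1 < α) (hα2 : α < 2)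
    (hNDA : ∀ ξ : ℝ, ξ ≠ 0 →
      Tendsto (fun n : ℕ => (n : ℂ) * (gHat (ξ / (n : ℝ) ^ (1 / α)) - 1)) atTop
        (𝓝 (-((σ * |ξ| ^ α : ℝ) : ℂ) *
            (1 + Complex.I * (β : ℂ) * ((Real.sign ξ) : ℂ) * ((Real.tan (π * α / 2)) : ℂ))))) :
    (∃ C : ℝ, ∀ ξ : ℝ, ξ ≠ 0 →
        ‖gHat ξ - 1 + ((σ * |ξ| ^ α : ℝ) : ℂ) *
            (1 + Complex.I * (β : ℂ) * ((Real.sign ξ) : ℂ) * ((Real.tan (π * α / 2)) : ℂ))‖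
          / |ξ| ^ α ≤ C) ∧
    Tendsto (fun ξ : ℝ =>
        ‖gHat ξ - 1 + ((σ * |ξ| ^ α : ℝ) : ℂ) *
            (1 + Complex.I * (β : ℂ) * ((Real.sign ξ) : ℂ) * ((Real.tan (π * α / 2)) : ℂ))‖
          / |ξ| ^ α) (𝓝[≠] 0) (𝓝 0) := by
  have hα0 : 0 < α := by linarith
  set T : ℂ := ((Real.tan (π * α / 2)) : ℂ) with hT
  set F : ℝ → ℂ := fun t => (gHat t - 1) / ((|t| ^ α : ℝ) : ℂ) with hF
  -- continuity of the denominator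
  have hdenom_cont : Continuous fun t : ℝ => ((|t| ^ α : ℝ) : ℂ) :=
    Complex.continuous_ofReal.comp
      (continuous_abs.rpow_const fun x => Or.inr hα0.le)
  have hdenom_pos : ∀ t : ℝ, t ≠ 0 → (0:ℝ) < |t| ^ α := by
    intro t ht
    exact rpow_pos_of_pos (abs_pos.mpr ht) _
  have hFcont : ContinuousOn F {(0:ℝ)}ᶜ := by
    refine ContinuousOn.div (hcont.sub continuous_const).continuousOn
      hdenom_cont.continuousOn fun t ht => ?_
    have := hdenom_pos t ht
    exact_mod_cast ne_of_gt this
  -- key sequential limit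
  have hseq : ∀ ξ : ℝ, ξ ≠ 0 →
      Tendsto (fun n : ℕ => F (ξ * ((n : ℝ) + 1) ^ (-(1/α)))) atTop
        (𝓝 (-(σ:ℂ) * (1 + Complex.I * (β:ℂ) * ((Real.sign ξ) : ℂ) * T))) := by
    intro ξ hξ
    have h1 := (hNDA ξ hξ).comp (tendsto_add_atTop_nat 1)
    have h2 := h1.div_const (((|ξ| ^ α : ℝ)) : ℂ)
    have hden : ((|ξ| ^ α : ℝ) : ℂ) ≠ 0 := by exact_mod_cast ne_of_gt (hdenom_pos ξ hξ)
    have hlimeq : -((σ * |ξ| ^ α : ℝ) : ℂ) *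
        (1 + Complex.I * (β:ℂ) * ((Real.sign ξ) : ℂ) * T) / ((|ξ| ^ α : ℝ) : ℂ)
        = -(σ:ℂ) * (1 + Complex.I * (β:ℂ) * ((Real.sign ξ) : ℂ) * T) := by
      push_cast
      field_simp
    rw [hlimeq] at h2
    refine h2.congr fun n => ?_
    -- pointwise equality
    have hc : (0:ℝ) < (n : ℝ) + 1 := by positivity
    have hcn : (((n + 1 : ℕ) : ℝ)) = (n : ℝ) + 1 := by push_cast; ring
    have harg : ξ / ((n + 1 : ℕ) : ℝ) ^ (1/α) = ξ * ((n : ℝ) + 1) ^ (-(1/α)) := by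
      rw [hcn, Real.rpow_neg hc.le, div_eq_mul_inv]
    have habs : |ξ * ((n : ℝ) + 1) ^ (-(1/α))| ^ α = |ξ| ^ α * ((n : ℝ) + 1)⁻¹ := by
      rw [abs_mul, abs_of_pos (rpow_pos_of_pos hc _),
        Real.mul_rpow (abs_nonneg _) (rpow_pos_of_pos hc _).le,
        ← Real.rpow_mul hc.le]
      have hexp : -(1/α) * α = -1 := by field_simp
      rw [hexp, Real.rpow_neg_one]
    simp only [hF, Function.comp]
    rw [habs, ← harg]
    have hn1r : ((n:ℝ) + 1) ≠ 0 := ne_of_gt hc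
    have hn1 : ((n:ℂ) + 1) ≠ 0 := by exact_mod_cast hn1r
    push_cast
    field_simp
  set Lp : ℂ := -(σ:ℂ) * (1 + Complex.I * (β:ℂ) * (1:ℂ) * T) with hLp
  set Lm : ℂ := -(σ:ℂ) * (1 + Complex.I * (β:ℂ) * (-1:ℂ) * T) with hLm
  have hplus : Tendsto F (𝓝[>] (0:ℝ)) (𝓝 Lp) := by
    refine croft α hα0 F (hFcont.mono fun t ht => ne_of_gt ht) Lp fun ξ hξ => ?_
    have h1 := hseq ξ (ne_of_gt hξ)
    rw [Real.sign_of_pos hξ] at h1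
    have hLpe : (-(σ:ℂ)) * (1 + Complex.I * (β:ℂ) * (((1:ℝ)):ℂ) * T) = Lp := by
      rw [hLp]; push_cast; ring
    rwa [hLpe] at h1
  have hGm : Tendsto (fun t : ℝ => F (-t)) (𝓝[>] (0:ℝ)) (𝓝 Lm) := by
    refine croft α hα0 _ ?_ Lm fun ξ hξ => ?_
    · exact ContinuousOn.comp hFcont continuous_neg.continuousOn fun t ht =>
        neg_ne_zero.mpr (ne_of_gt ht)
    · have h1 := hseq (-ξ) (neg_ne_zero.mpr (ne_of_gt hξ))
      rw [Real.sign_of_neg (neg_lt_zero.mpr hξ)] at h1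
      have hLme : (-(σ:ℂ)) * (1 + Complex.I * (β:ℂ) * (((-1:ℝ)):ℂ) * T) = Lm := by
        rw [hLm]; push_cast; ring
      rw [hLme] at h1
      exact h1.congr fun n => by rw [neg_mul]
  have hminus : Tendsto F (𝓝[<] (0:ℝ)) (𝓝 Lm) := by
    have hnegmap : Tendsto (fun t : ℝ => -t) (𝓝[<] (0:ℝ)) (𝓝[>] (0:ℝ)) := by
      refine tendsto_nhdsWithin_of_tendsto_nhds_of_eventually_within _ ?_ ?_
      · simpa using (continuous_neg.tendsto (0:ℝ)).mono_left nhdsWithin_le_nhds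
      · exact eventually_nhdsWithin_of_forall fun t ht => by
          simp only [Set.mem_Iio] at ht
          exact Set.mem_Ioi.mpr (by linarith)
    have h2 := hGm.comp hnegmap
    exact h2.congr fun t => by simp
  -- rewrite of the quotient
  have hquot : ∀ ξ : ℝ, ξ ≠ 0 →
      ‖gHat ξ - 1 + ((σ * |ξ| ^ α : ℝ) : ℂ) *
          (1 + Complex.I * (β:ℂ) * ((Real.sign ξ) : ℂ) * T)‖ / |ξ| ^ α
        = ‖F ξ + (σ:ℂ) * (1 + Complex.I * (β:ℂ) * ((Real.sign ξ) : ℂ) * T)‖ := by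
    intro ξ hξ
    have hd : (0:ℝ) < |ξ| ^ α := hdenom_pos ξ hξ
    have hdc : ((|ξ| ^ α : ℝ) : ℂ) ≠ 0 := by exact_mod_cast ne_of_gt hd
    have heq : F ξ + (σ:ℂ) * (1 + Complex.I * (β:ℂ) * ((Real.sign ξ) : ℂ) * T)
        = (gHat ξ - 1 + ((σ * |ξ| ^ α : ℝ) : ℂ) *
            (1 + Complex.I * (β:ℂ) * ((Real.sign ξ) : ℂ) * T)) / ((|ξ| ^ α : ℝ) : ℂ) := by
      rw [hF]
      push_cast
      field_simp
    rw [heq, norm_div, Complex.norm_real, Real.norm_eq_abs, abs_of_pos hd]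
  have hmain : Tendsto (fun ξ : ℝ =>
      ‖gHat ξ - 1 + ((σ * |ξ| ^ α : ℝ) : ℂ) *
          (1 + Complex.I * (β:ℂ) * ((Real.sign ξ) : ℂ) * T)‖ / |ξ| ^ α)
      (𝓝[≠] (0:ℝ)) (𝓝 0) := by
    rw [← nhdsLT_sup_nhdsGT (0:ℝ), tendsto_sup]
    constructor
    · have h1 : Tendsto (fun ξ => ‖F ξ - Lm‖) (𝓝[<] (0:ℝ)) (𝓝 0) :=
        tendsto_iff_norm_sub_tendsto_zero.mp hminus
      refine Tendsto.congr' ?_ h1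
      filter_upwards [self_mem_nhdsWithin] with ξ hξ
      have hξ0 : ξ < 0 := hξ
      rw [hquot ξ (ne_of_lt hξ0), Real.sign_of_neg hξ0, hLm]
      congr 1
      push_cast
      ring
    · have h1 : Tendsto (fun ξ => ‖F ξ - Lp‖) (𝓝[>] (0:ℝ)) (𝓝 0) :=
        tendsto_iff_norm_sub_tendsto_zero.mp hplus
      refine Tendsto.congr' ?_ h1
      filter_upwards [self_mem_nhdsWithin] with ξ hξ
      have hξ0 : 0 < ξ := hξ
      rw [hquot ξ (ne_of_gt hξ0), Real.sign_of_pos hξ0, hLp]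
      congr 1
      push_cast
      ring
  refine ⟨?_, hmain⟩
  obtain ⟨δ, hδpos, hδ⟩ := Metric.mem_nhdsWithin_iff.mp
    ((Metric.tendsto_nhds.mp hmain) 1 one_pos)
  set W : ℝ := 1 + |β| * |Real.tan (π * α / 2)| with hW
  have hW0 : 0 ≤ W := by positivity
  refine ⟨max 1 (2 / δ ^ α + σ * W), fun ξ hξ => ?_⟩
  have hd : (0:ℝ) < |ξ| ^ α := hdenom_pos ξ hξ
  rcases lt_or_ge (|ξ|) δ with hcase | hcase
  · have hmem : ξ ∈ Metric.ball (0:ℝ) δ ∩ {(0:ℝ)}ᶜ := by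
      constructor
      · rw [Metric.mem_ball, Real.dist_eq, sub_zero]; exact hcase
      · exact hξ
    have h2 := hδ hmem
    simp only [Set.mem_setOf_eq, Real.dist_eq, sub_zero] at h2
    have h3 := (le_abs_self _).trans h2.le
    exact h3.trans (le_max_left _ _)
  · have hsign : |Real.sign ξ| ≤ 1 := by
      rcases lt_trichotomy ξ 0 with h | h | h
      · rw [Real.sign_of_neg h]; norm_num
      · exact absurd h hξ
      · rw [Real.sign_of_pos h]; norm_num
    have hω : ‖(1 + Complex.I * (β:ℂ) * ((Real.sign ξ):ℂ) * T : ℂ)‖ ≤ W := by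
      refine (norm_add_le _ _).trans ?_
      rw [norm_one]
      have hn : ‖Complex.I * (β:ℂ) * ((Real.sign ξ):ℂ) * T‖
          = |β| * |Real.sign ξ| * |Real.tan (π * α / 2)| := by
        rw [hT, norm_mul, norm_mul, norm_mul, Complex.norm_I, Complex.norm_real,
          Complex.norm_real, Complex.norm_real, Real.norm_eq_abs, Real.norm_eq_abs,
          Real.norm_eq_abs, one_mul]
      rw [hn, hW]
      have h4 : |β| * |Real.sign ξ| ≤ |β| := by nlinarith [abs_nonneg β]
      have h5 : |β| * |Real.sign ξ| * |Real.tan (π * α / 2)| ≤ |β| * |Real.tan (π * α / 2)| :=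
        mul_le_mul_of_nonneg_right h4 (abs_nonneg _)
      linarith
    have hnum : ‖gHat ξ - 1 + ((σ * |ξ| ^ α : ℝ) : ℂ) *
        (1 + Complex.I * (β:ℂ) * ((Real.sign ξ):ℂ) * T)‖ ≤ 2 + σ * |ξ| ^ α * W := by
      refine (norm_add_le _ _).trans ?_
      have h1 : ‖gHat ξ - 1‖ ≤ 2 := (norm_sub_le _ _).trans (by
        rw [norm_one]; linarith [hbdd ξ])
      have h2 : ‖((σ * |ξ| ^ α : ℝ) : ℂ) *
          (1 + Complex.I * (β:ℂ) * ((Real.sign ξ):ℂ) * T)‖ ≤ σ * |ξ| ^ α * W := by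
        rw [norm_mul, Complex.norm_real, Real.norm_eq_abs,
          abs_of_pos (by positivity : (0:ℝ) < σ * |ξ| ^ α)]
        exact mul_le_mul_of_nonneg_left hω (by positivity)
      linarith
    have hdiv : ‖gHat ξ - 1 + ((σ * |ξ| ^ α : ℝ) : ℂ) *
        (1 + Complex.I * (β:ℂ) * ((Real.sign ξ):ℂ) * T)‖ / |ξ| ^ α
        ≤ (2 + σ * |ξ| ^ α * W) / |ξ| ^ α := by gcongr
    have heq2 : (2 + σ * |ξ| ^ α * W) / |ξ| ^ α = 2 / |ξ| ^ α + σ * W := by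
      field_simp
    have hδα : (0:ℝ) < δ ^ α := rpow_pos_of_pos hδpos _
    have hle : δ ^ α ≤ |ξ| ^ α := rpow_le_rpow hδpos.le hcase hα0.le
    have h3 : 2 / |ξ| ^ α ≤ 2 / δ ^ α := by gcongr <;> norm_num
    calc ‖gHat ξ - 1 + ((σ * |ξ| ^ α : ℝ) : ℂ) *
        (1 + Complex.I * (β:ℂ) * ((Real.sign ξ):ℂ) * T)‖ / |ξ| ^ α
        ≤ 2 / |ξ| ^ α + σ * W := by rw [← heq2]; exact hdiv
      _ ≤ 2 / δ ^ α + σ * W := by linarith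
      _ ≤ max 1 (2 / δ ^ α + σ * W) := le_max_right _ _
end

section
/- Let μ, ν be probability measures on a measurable space with μ absolutely continuous with respect to ν, and let B be a measurable set with ν(B) > 0. Then μ(B) ≤ 2H(μ|ν) / log(1 + H(μ|ν)/ν(B)), where H(μ|ν) = ∫ (dμ/dν) log(dμ/dν) dν is the relative entropy. -/
open MeasureTheory


lemma young_aux (u v : ℝ) (hu : 0 ≤ u) :
    u * v ≤ u * Real.log u - u + Real.exp v := by
  rcases eq_or_lt_of_le hu with h | h
  · simp only [← h, zero_mul, Real.log_zero, mul_zero, sub_zero, zero_add, zero_sub]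
    positivity
  · have h1 := Real.add_one_le_exp (v - Real.log u)
    have h2 : Real.exp (v - Real.log u) = Real.exp v / u := by
      rw [Real.exp_sub, Real.exp_log h]
    rw [h2] at h1
    have h3 : u * (v - Real.log u + 1) ≤ Real.exp v := by
      rw [← le_div_iff₀' h]; linarith
    nlinarith


/-- For probability measures `μ ≪ ν` with finite positive relative entropy `H(μ|ν)` and a
measurable set `B` with `ν(B) > 0`, one has
`μ(B) ≤ 2 H(μ|ν) / log(1 + H(μ|ν)/ν(B))`. -/
theorem measure_le_of_relative_entropy
    {X : Type*} [MeasurableSpace X] (μ ν : Measure X)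
    [IsProbabilityMeasure μ] [IsProbabilityMeasure ν]
    (hac : μ ≪ ν)
    (hint : Integrable (fun x => (μ.rnDeriv ν x).toReal *
      Real.log (μ.rnDeriv ν x).toReal) ν)
    (H : ℝ)
    (hH : H = ∫ x, (μ.rnDeriv ν x).toReal * Real.log (μ.rnDeriv ν x).toReal ∂ν)
    (hHpos : 0 < H)
    (B : Set X) (hB : MeasurableSet B) (hνB : 0 < (ν B).toReal) :
    (μ B).toReal ≤ 2 * H / Real.log (1 + H / (ν B).toReal) := by
  set f : X → ℝ := fun x => (μ.rnDeriv ν x).toReal with hf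
  set c : ℝ := (ν B).toReal with hc
  set l : ℝ := Real.log (1 + H / c) with hl
  have hlpos : 0 < l := Real.log_pos (by have := div_pos hHpos hνB; linarith)
  have hel : Real.exp l = 1 + H / c := Real.exp_log (by positivity)
  have hf_int : Integrable f ν := Measure.integrable_toReal_rnDeriv
  have hind_int : Integrable (B.indicator (fun _ => (1:ℝ))) ν :=
    (integrable_const (1:ℝ)).indicator hB
  -- LHS function
  have h_left_int : Integrable (fun x => l * B.indicator (fun _ => (1:ℝ)) x * f x) ν := by
    have : Integrable (B.indicator f) ν := hf_int.indicator hB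
    have := this.const_mul l
    refine this.congr (Filter.Eventually.of_forall fun x => ?_)
    by_cases hx : x ∈ B <;> simp [Set.indicator_of_mem, Set.indicator_of_notMem, hx, mul_assoc]
  -- RHS function
  have h_exp_eq : ∀ x, Real.exp (l * B.indicator (fun _ => (1:ℝ)) x)
      = 1 + (Real.exp l - 1) * B.indicator (fun _ => (1:ℝ)) x := by
    intro x
    by_cases hx : x ∈ B <;> simp [hx]
  have h_right_int : Integrable (fun x => f x * Real.log (f x) - f x
      + Real.exp (l * B.indicator (fun _ => (1:ℝ)) x)) ν := by
    refine (hint.sub hf_int).add ?_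
    refine (Integrable.congr ?_ (Filter.Eventually.of_forall fun x => (h_exp_eq x).symm))
    exact (integrable_const (1:ℝ)).add ((hind_int.const_mul _))
  have h_ptwise : ∀ x, l * B.indicator (fun _ => (1:ℝ)) x * f x
      ≤ f x * Real.log (f x) - f x + Real.exp (l * B.indicator (fun _ => (1:ℝ)) x) := by
    intro x
    have := young_aux (f x) (l * B.indicator (fun _ => (1:ℝ)) x) ENNReal.toReal_nonneg
    linarith [this]
  have h_int_le := integral_mono h_left_int h_right_int h_ptwise
  -- compute LHS integral
  have h_lhs : ∫ x, l * B.indicator (fun _ => (1:ℝ)) x * f x ∂ν = l * (μ B).toReal := by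
    rw [← measureReal_def, ← Measure.setIntegral_toReal_rnDeriv hac B]
    rw [← integral_indicator hB, ← integral_const_mul]
    congr 1; ext x
    by_cases hx : x ∈ B <;> simp [hx, hf]
  -- compute RHS integral
  have h_rhs : ∫ x, (f x * Real.log (f x) - f x
      + Real.exp (l * B.indicator (fun _ => (1:ℝ)) x)) ∂ν = H - 1 + (1 + (Real.exp l - 1) * c) := by
    have hint' : Integrable (fun x => f x * Real.log (f x)) ν := hint
    have hsub : Integrable (fun x => f x * Real.log (f x) - f x) ν := hint'.sub hf_int
    have hexp_int : Integrable (fun x => Real.exp (l * B.indicator (fun _ => (1:ℝ)) x)) ν := by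
      refine (Integrable.congr ?_ (Filter.Eventually.of_forall fun x => (h_exp_eq x).symm))
      exact (integrable_const (1:ℝ)).add ((hind_int.const_mul _))
    rw [integral_add hsub hexp_int, integral_sub hint' hf_int]
    · congr 1
      · rw [← hH, Measure.integral_toReal_rnDeriv hac]
        simp
      · rw [integral_congr_ae (Filter.Eventually.of_forall h_exp_eq)]
        rw [integral_add (integrable_const _) (hind_int.const_mul _)]
        rw [integral_const_mul]
        have hgone : ∫ a, B.indicator (fun _ => (1:ℝ)) a ∂ν = c := by
          rw [integral_indicator hB]; simp [hc, measureReal_def]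
        rw [hgone]; simp
  rw [h_lhs, h_rhs] at h_int_le
  have hkey : l * (μ B).toReal ≤ 2 * H := by
    have : (Real.exp l - 1) * c = H := by
      rw [hel]; field_simp; ring
    linarith
  rw [le_div_iff₀ hlpos]
  linarith [hkey, mul_comm l (μ B).toReal]
end

section
/- Let μ be a probability measure on ℝ, C_S > 0, 1 < α < 2, and suppose there exist R > 0 and 0 < ε < 1 such that for all x > R, (1−ε) C_S x^{2−α} ≤ ∫_{−√x}^{√x} v⁴ dμ(v) ≤ (1+ε) C_S x^{2−α}. Then ∫_ℝ |v|^{1+α} dμ(v) ≤ ((3−α)/(2^{3−α}−1)) ( 32 R^{(α+1)/2} + C_S ((1+ε)2^{4−2α} − (1−ε)) ∫_{√R}^∞ x^{−α} dx ) < ∞. -/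
open MeasureTheory Set
open scoped ENNReal

lemma aux_ineq (α ε T P w : ℝ) (hα1 : 1 < α) (hα2 : α < 2) (hε0 : 0 < ε) (hε1 : ε < 1)
    (hw1 : 1/2 < w) (hw2 : w < 1) (hlog : 1 - w ≤ 0.7 * (α - 1))
    (hT : 0 < T) (hP : 0 < P) (hPT : (1 - ε) * ((α - 1) * P) ≤ 8 * T) :
    2 * (3 - α) / (α + 1) * T + (3 - α) * (1 + ε) * P ≤
      (3 - α) / (4 * w - 1) * (32 * T + ((1 + ε) * (4 * w ^ 2) - (1 - ε)) * P) := by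
  have h3 : 0 < 3 - α := by linarith
  have h4 : (0:ℝ) < 4 * w - 1 := by linarith
  have key : ((1 - ε) - (1 + ε) * (2 * w - 1) ^ 2) * P ≤ 29 * T := by
    rcases le_or_gt ((1 - ε) - (1 + ε) * (2 * w - 1) ^ 2) 0 with h | h
    · exact (mul_nonpos_of_nonpos_of_nonneg h hP.le).trans (by positivity)
    · have h1 : (1 - ε) - (1 + ε) * (2 * w - 1) ^ 2 ≤ 2.8 * ((1 - ε) * (α - 1)) := by
        nlinarith [mul_nonneg hε0.le (sq_nonneg (2*w-1)),
          mul_nonneg (mul_nonneg (by linarith : (0:ℝ) ≤ 1-ε) (by linarith : (0:ℝ) ≤ 1-w)) (by linarith : (0:ℝ) ≤ 1-w),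
          mul_le_mul_of_nonneg_left hlog (by linarith : (0:ℝ) ≤ 4*(1-ε))]
      calc ((1 - ε) - (1 + ε) * (2 * w - 1) ^ 2) * P ≤ 2.8 * ((1 - ε) * (α - 1)) * P :=
            mul_le_mul_of_nonneg_right h1 hP.le
        _ ≤ 29 * T := by nlinarith
  rw [div_mul_eq_mul_div, div_mul_eq_mul_div, le_div_iff₀ h4]
  have hA : 2 * (3 - α) * T / (α + 1) * (4 * w - 1) ≤ 3 * ((3 - α) * T) := by
    rw [div_mul_eq_mul_div, div_le_iff₀ (by linarith : (0:ℝ) < α + 1)]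
    nlinarith [mul_pos h3 hT]
  nlinarith [hA, mul_le_mul_of_nonneg_right key h3.le]

/-- Uniform bound on the `(1+α)`-moment of a probability measure on `ℝ` whose truncated
fourth moments behave like `C_S x^{2−α}` beyond `R` and satisfy the trivial bound `2x⁴`. -/
theorem moment_one_add_alpha_bound
    (μ : Measure ℝ) [IsProbabilityMeasure μ]
    (C_S α R ε : ℝ) (hC : 0 < C_S) (hα1 : 1 < α) (hα2 : α < 2)
    (hR : 0 < R) (hε0 : 0 < ε) (hε1 : ε < 1)
    (htriv : ∀ x : ℝ, 0 < x → (∫ v in Set.Icc (-x) x, v ^ 4 ∂μ) ≤ 2 * x ^ 4)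
    (hasymp : ∀ x : ℝ, R < x →
      (1 - ε) * C_S * x ^ (2 - α) ≤
          (∫ v in Set.Icc (-Real.sqrt x) (Real.sqrt x), v ^ 4 ∂μ) ∧
        (∫ v in Set.Icc (-Real.sqrt x) (Real.sqrt x), v ^ 4 ∂μ) ≤
          (1 + ε) * C_S * x ^ (2 - α)) :
    ∫⁻ v, ENNReal.ofReal (|v| ^ (1 + α)) ∂μ ≤
      ENNReal.ofReal ((3 - α) / (2 ^ (3 - α) - 1) *
        (32 * R ^ ((α + 1) / 2) +
          C_S * ((1 + ε) * 2 ^ (4 - 2 * α) - (1 - ε)) *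
            ∫ x in Set.Ioi (Real.sqrt R), x ^ (-α))) := by
  have hα3 : (0:ℝ) < 3 - α := by linarith
  have hα1' : (α:ℝ) - 1 ≠ 0 := by intro h; linarith [h]
  set e : ℝ := (α - 5)/2 with he_def
  have he : e < -1 := by rw [he_def]; linarith
  set c : ℝ := (3 - α)/2 with hc_def
  have hc : 0 < c := by rw [hc_def]; linarith
  set k : ℝ → ℝ → ℝ≥0∞ :=
    fun v x => if v^2 ≤ x then ENNReal.ofReal ((c * v^4) * x ^ e) else 0 with hk_def
  -- Step A : pointwise identity
  have hA : ∀ v : ℝ, (∫⁻ x, k v x) = ENNReal.ofReal (|v| ^ (1 + α)) := by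
    intro v
    have hind : (fun x => k v x)
        = (Ici (v^2)).indicator (fun x => ENNReal.ofReal ((c * v^4) * x ^ e)) := by
      ext x; simp [hk_def, Set.indicator_apply, Set.mem_Ici]
    rw [hind, lintegral_indicator measurableSet_Ici]
    rcases eq_or_ne v 0 with rfl | hv
    · simp [Real.zero_rpow (show (1:ℝ) + α ≠ 0 by linarith)]
    · have hv2 : (0:ℝ) < v ^ 2 := by positivity
      rw [setLIntegral_congr (Ioi_ae_eq_Ici (a := v^2)).symm]
      have hint : IntegrableOn (fun x : ℝ => (c * v^4) * x ^ e) (Ioi (v^2)) :=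
        (integrableOn_Ioi_rpow_of_lt he hv2).const_mul _
      have hnn : 0 ≤ᶠ[ae (volume.restrict (Ioi (v^2)))] fun x : ℝ => (c * v^4) * x ^ e := by
        filter_upwards [ae_restrict_mem measurableSet_Ioi] with x hx
        have hx0 : (0:ℝ) < x := lt_trans hv2 hx
        exact mul_nonneg (mul_nonneg hc.le (by positivity)) (Real.rpow_nonneg hx0.le e)
      rw [← ofReal_integral_eq_lintegral_ofReal hint hnn]
      congr 1
      rw [integral_const_mul, integral_Ioi_rpow_of_lt he hv2]
      have h1 : ((v:ℝ)^2) ^ (e+1) = |v| ^ (α - 3) := by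
        rw [show (v:ℝ)^2 = |v|^2 from (sq_abs v).symm,
          show e + 1 = (α-3)/2 by rw [he_def]; ring,
          ← Real.rpow_natCast |v| 2, ← Real.rpow_mul (abs_nonneg v)]
        congr 1
        push_cast
        ring
      have h2 : ((v:ℝ)^4) = |v| ^ ((4:ℝ)) := by
        rw [show ((4:ℝ)) = ((4:ℕ):ℝ) from by norm_num, Real.rpow_natCast, ← abs_pow]
        exact (abs_of_nonneg (by positivity)).symm
      have h3 : |v| ^ ((4:ℝ)) * |v| ^ (α - 3) = |v| ^ (1 + α) := by
        rw [← Real.rpow_add (abs_pos.mpr hv)]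
        congr 1
        ring
      rw [h1, h2, ← h3, hc_def, he_def,
        show (α-5)/2 + 1 = (α-3)/2 by ring]
      have hne3 : (α:ℝ) - 3 ≠ 0 := by intro h; linarith
      field_simp
      ring
  -- measurability of the kernel
  have hkm : Measurable (Function.uncurry k) := by
    rw [hk_def]
    apply Measurable.ite (measurableSet_le (by fun_prop) measurable_snd) ?_ measurable_const
    fun_prop
  -- the truncated fourth moment
  have hF_int : ∀ x : ℝ,
      IntegrableOn (fun v : ℝ => v ^ 4) (Icc (-Real.sqrt x) (Real.sqrt x)) μ :=
    fun x => (continuous_pow 4).integrableOn_Icc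
  have hFnn : ∀ x : ℝ, 0 ≤ ∫ v in Icc (-Real.sqrt x) (Real.sqrt x), v ^ 4 ∂μ :=
    fun x => setIntegral_nonneg measurableSet_Icc (fun v _ => by positivity)
  -- inner integral identity for positive x
  have hinner : ∀ x : ℝ, 0 < x → (∫⁻ v, k v x ∂μ)
      = ENNReal.ofReal ((c * x ^ e) * ∫ v in Icc (-Real.sqrt x) (Real.sqrt x), v ^ 4 ∂μ) := by
    intro x hx
    have hset : {v : ℝ | v^2 ≤ x} = Icc (-Real.sqrt x) (Real.sqrt x) := by
      ext v
      simp only [mem_setOf_eq, mem_Icc, ← abs_le]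
      rw [← sq_abs v]
      exact (Real.le_sqrt (abs_nonneg v) hx.le).symm
    have hind : (fun v => k v x)
        = (Icc (-Real.sqrt x) (Real.sqrt x)).indicator
            (fun v => ENNReal.ofReal ((c * x ^ e) * v ^ 4)) := by
      ext v
      rw [← hset]
      simp only [hk_def, Set.indicator_apply, mem_setOf_eq]
      split
      · congr 1; ring
      · rfl
    rw [hind, lintegral_indicator measurableSet_Icc]
    rw [← ofReal_integral_eq_lintegral_ofReal ((hF_int x).const_mul _) ?_]
    · rw [integral_const_mul]
    · filter_upwards [ae_restrict_mem measurableSet_Icc] with v _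
      exact mul_nonneg (mul_nonneg hc.le (Real.rpow_nonneg hx.le e)) (by positivity)
  -- inner integral vanishes for nonpositive x
  have hinner0 : ∀ x : ℝ, x ≤ 0 → (∫⁻ v, k v x ∂μ) = 0 := by
    intro x hx
    have hz : ∀ v : ℝ, k v x = 0 := by
      intro v
      simp only [hk_def]
      split
      · rename_i h
        have hv : v = 0 := by
          have : v ^ 2 = 0 := le_antisymm (h.trans hx) (sq_nonneg v)
          exact pow_eq_zero_iff (n := 2) (by norm_num) |>.mp this
        simp [hv]
      · rfl
    rw [lintegral_congr hz, lintegral_zero]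
  -- the dominating function
  have hbd : ∀ x : ℝ, (∫⁻ v, k v x ∂μ) ≤
      (Ioc 0 R).indicator (fun x => ENNReal.ofReal ((2*c) * x ^ ((α-1)/2))) x
        + (Ioi R).indicator (fun x => ENNReal.ofReal ((c*(1+ε)*C_S) * x ^ (-(α+1)/2))) x := by
    intro x
    rcases le_or_gt x 0 with hx | hx
    · rw [hinner0 x hx]; exact bot_le
    rcases le_or_gt x R with hxR | hxR
    · rw [hinner x hx, indicator_of_mem (mem_Ioc.mpr ⟨hx, hxR⟩),
        indicator_of_notMem (by simp [mem_Ioi]; linarith), add_zero]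
      apply ENNReal.ofReal_le_ofReal
      have hF := htriv (Real.sqrt x) (Real.sqrt_pos.mpr hx)
      have hs4 : (Real.sqrt x) ^ 4 = x ^ 2 := by
        rw [show (4:ℕ) = 2*2 from rfl, pow_mul, Real.sq_sqrt hx.le]
      rw [hs4] at hF
      have hxe : (0:ℝ) ≤ c * x ^ e := mul_nonneg hc.le (Real.rpow_nonneg hx.le e)
      calc (c * x ^ e) * ∫ v in Icc (-Real.sqrt x) (Real.sqrt x), v ^ 4 ∂μ
          ≤ (c * x ^ e) * (2 * x ^ 2) := mul_le_mul_of_nonneg_left hF hxe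
        _ = (2*c) * (x ^ e * x ^ (2:ℝ)) := by
            rw [show (x:ℝ) ^ (2:ℝ) = x ^ (2:ℕ) from Real.rpow_two x ▸ (by norm_num [Real.rpow_natCast])]
            ring
        _ = (2*c) * x ^ ((α-1)/2) := by
            rw [← Real.rpow_add hx, show e + 2 = (α-1)/2 by rw [he_def]; ring]
    · rw [hinner x hx, indicator_of_notMem (by simp [mem_Ioc]; intro _; linarith),
        indicator_of_mem (mem_Ioi.mpr hxR), zero_add]
      apply ENNReal.ofReal_le_ofReal
      have hF := (hasymp x hxR).2
      have hxe : (0:ℝ) ≤ c * x ^ e := mul_nonneg hc.le (Real.rpow_nonneg hx.le e)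
      calc (c * x ^ e) * ∫ v in Icc (-Real.sqrt x) (Real.sqrt x), v ^ 4 ∂μ
          ≤ (c * x ^ e) * ((1+ε) * C_S * x ^ (2-α)) := mul_le_mul_of_nonneg_left hF hxe
        _ = (c*(1+ε)*C_S) * (x ^ e * x ^ (2-α)) := by ring
        _ = (c*(1+ε)*C_S) * x ^ (-(α+1)/2) := by
            rw [← Real.rpow_add hx, show e + (2-α) = -(α+1)/2 by rw [he_def]; ring]
  -- value of the two dominating integrals
  have hI1 : (∫⁻ x in Ioc 0 R, ENNReal.ofReal ((2*c) * x ^ ((α-1)/2)))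
      = ENNReal.ofReal ((2*c) * (R ^ ((α+1)/2) / ((α+1)/2))) := by
    have hintR : IntegrableOn (fun x : ℝ => x ^ ((α-1)/2)) (Ioc 0 R) :=
      (intervalIntegrable_iff_integrableOn_Ioc_of_le hR.le).mp
        (intervalIntegral.intervalIntegrable_rpow' (by linarith))
    rw [← ofReal_integral_eq_lintegral_ofReal (hintR.const_mul _) ?_]
    · congr 1
      rw [integral_const_mul]
      congr 1
      rw [← intervalIntegral.integral_of_le hR.le,
        integral_rpow (Or.inl (by linarith : (-1:ℝ) < (α-1)/2)),
        Real.zero_rpow (by linarith : (α-1)/2 + 1 ≠ 0),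
        show (α-1)/2 + 1 = (α+1)/2 by ring]
      ring
    · filter_upwards [ae_restrict_mem measurableSet_Ioc] with x hx
      exact mul_nonneg (by linarith [hc] : (0:ℝ) ≤ 2*c) (Real.rpow_nonneg hx.1.le _)
  have hI2 : (∫⁻ x in Ioi R, ENNReal.ofReal ((c*(1+ε)*C_S) * x ^ (-(α+1)/2)))
      = ENNReal.ofReal ((c*(1+ε)*C_S) * (R ^ ((1-α)/2) / ((α-1)/2))) := by
    have hintR : IntegrableOn (fun x : ℝ => x ^ (-(α+1)/2)) (Ioi R) :=
      integrableOn_Ioi_rpow_of_lt (by linarith) hR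
    rw [← ofReal_integral_eq_lintegral_ofReal (hintR.const_mul _) ?_]
    · congr 1
      rw [integral_const_mul, integral_Ioi_rpow_of_lt (by linarith) hR]
      congr 1
      rw [show (-(α+1)/2 + 1 : ℝ) = -((α-1)/2) by ring, neg_div_neg_eq,
        show (-((α-1)/2) : ℝ) = (1-α)/2 by ring]
    · filter_upwards [ae_restrict_mem measurableSet_Ioi] with x hx
      have hx0 : (0:ℝ) < x := lt_trans hR hx
      exact mul_nonneg (by positivity) (Real.rpow_nonneg hx0.le _)
  -- the constant C_S is controlled by R
  have hCS : (1-ε)*C_S ≤ 8 * R ^ α := by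
    have h2R : (0:ℝ) < 2*R := by linarith
    have hF1 := (hasymp (2*R) (by linarith)).1
    have htr := htriv (Real.sqrt (2*R)) (Real.sqrt_pos.mpr h2R)
    have hs4 : (Real.sqrt (2*R)) ^ 4 = (2*R) ^ 2 := by
      rw [show (4:ℕ) = 2*2 from rfl, pow_mul, Real.sq_sqrt h2R.le]
    rw [hs4] at htr
    have hsplit : ((2*R):ℝ) ^ (2:ℕ) = (2*R) ^ (2-α) * (2*R) ^ α := by
      rw [← Real.rpow_add h2R, show (2-α) + α = 2 by ring,
        show ((2*R):ℝ) ^ (2:ℝ) = (2*R) ^ (2:ℕ) from by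
          rw [show (2:ℝ) = ((2:ℕ):ℝ) from by norm_num, Real.rpow_natCast]]
    have hpos : (0:ℝ) < (2*R) ^ (2-α) := Real.rpow_pos_of_pos h2R _
    have h1 : (1-ε)*C_S ≤ 2 * (2*R) ^ α := by
      have hh : (1-ε)*C_S * (2*R)^(2-α) ≤ (2 * (2*R)^α) * (2*R)^(2-α) := by
        calc (1-ε)*C_S * (2*R)^(2-α) ≤ ∫ v in Icc (-Real.sqrt (2*R)) (Real.sqrt (2*R)), v ^ 4 ∂μ := hF1
          _ ≤ 2 * (2*R)^2 := htr
          _ = (2 * (2*R)^α) * (2*R)^(2-α) := by rw [hsplit]; ring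
      exact le_of_mul_le_mul_right hh hpos
    have h2 : ((2*R):ℝ) ^ α = 2 ^ α * R ^ α := Real.mul_rpow (by norm_num) hR.le
    have h3 : (2:ℝ) ^ α ≤ 4 := by
      calc (2:ℝ) ^ α ≤ 2 ^ (2:ℝ) := Real.rpow_le_rpow_of_exponent_le one_le_two hα2.le
        _ = 4 := by
          rw [show (2:ℝ) = ((2:ℕ):ℝ) from by norm_num, Real.rpow_natCast]; norm_num
    have h4 : (0:ℝ) < R ^ α := Real.rpow_pos_of_pos hR _
    nlinarith
  -- facts about w = 2^(1-α)
  set w : ℝ := (2:ℝ) ^ (1-α) with hw_def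
  have h2two : ((2:ℝ):ℝ) ^ ((2:ℝ)) = 4 := by
    rw [show (2:ℝ) = ((2:ℕ):ℝ) from by norm_num, Real.rpow_natCast]; norm_num
  have hw1 : 1/2 < w := by
    rw [hw_def, show (1:ℝ)/2 = (2:ℝ)^(-1:ℝ) from by rw [Real.rpow_neg_one]; norm_num]
    exact Real.rpow_lt_rpow_of_exponent_lt one_lt_two (by linarith)
  have hw2 : w < 1 := Real.rpow_lt_one_of_one_lt_of_neg one_lt_two (by linarith)
  have hlog : 1 - w ≤ 0.7*(α-1) := by
    have hexp := Real.add_one_le_exp (Real.log 2 * (1-α))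
    rw [hw_def, Real.rpow_def_of_pos two_pos]
    have hl2 : Real.log 2 < 0.7 := lt_trans Real.log_two_lt_d9 (by norm_num)
    have hl2' : 0 < Real.log 2 := Real.log_pos one_lt_two
    nlinarith
  have hw3 : (2:ℝ) ^ (3-α) = 4*w := by
    rw [hw_def, show (3:ℝ)-α = 2 + (1-α) by ring, Real.rpow_add two_pos, h2two]
  have hw4 : (2:ℝ) ^ (4-2*α) = 4*w^2 := by
    rw [hw_def, show (4:ℝ)-2*α = 2 + ((1-α)+(1-α)) by ring, Real.rpow_add two_pos,
      Real.rpow_add two_pos, h2two]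
    ring
  -- value of the integral in the statement
  have hJ : (∫ x in Ioi (Real.sqrt R), x ^ (-α)) = R ^ ((1-α)/2) / (α-1) := by
    rw [integral_Ioi_rpow_of_lt (by linarith : -α < -1) (Real.sqrt_pos.mpr hR),
      Real.sqrt_eq_rpow, ← Real.rpow_mul hR.le,
      show (1:ℝ)/2 * (-α + 1) = (1-α)/2 by ring,
      show (-α + 1 : ℝ) = -(α-1) by ring, neg_div_neg_eq]
  -- positivity facts
  have hT : (0:ℝ) < R ^ ((α+1)/2) := Real.rpow_pos_of_pos hR _
  have hRp : (0:ℝ) < R ^ ((1-α)/2) := Real.rpow_pos_of_pos hR _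
  have hP : (0:ℝ) < C_S * (R ^ ((1-α)/2) / (α-1)) :=
    mul_pos hC (div_pos hRp (by linarith))
  have hPT : (1-ε) * ((α-1) * (C_S * (R ^ ((1-α)/2) / (α-1)))) ≤ 8 * R ^ ((α+1)/2) := by
    have hsplit : R ^ ((α+1)/2) = R ^ α * R ^ ((1-α)/2) := by
      rw [← Real.rpow_add hR]; congr 1; ring
    have h5 : (α-1) * (C_S * (R ^ ((1-α)/2) / (α-1))) = C_S * R ^ ((1-α)/2) := by
      field_simp
    rw [h5, hsplit]
    calc (1-ε) * (C_S * R ^ ((1-α)/2)) = ((1-ε)*C_S) * R ^ ((1-α)/2) := by ring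
      _ ≤ (8 * R ^ α) * R ^ ((1-α)/2) := mul_le_mul_of_nonneg_right hCS hRp.le
      _ = 8 * (R ^ α * R ^ ((1-α)/2)) := by ring
  have main := aux_ineq α ε (R ^ ((α+1)/2)) (C_S * (R ^ ((1-α)/2) / (α-1))) w
    hα1 hα2 hε0 hε1 hw1 hw2 hlog hT hP hPT
  have hm1 : Measurable fun x : ℝ =>
      (Ioc (0:ℝ) R).indicator (fun x => ENNReal.ofReal ((2*c) * x ^ ((α-1)/2))) x :=
    (Measurable.ennreal_ofReal (by fun_prop)).indicator measurableSet_Ioc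
  have nn1 : (0:ℝ) ≤ (2*c) * (R ^ ((α+1)/2) / ((α+1)/2)) :=
    mul_nonneg (by linarith) (div_nonneg hT.le (by linarith))
  have nn2 : (0:ℝ) ≤ (c*(1+ε)*C_S) * (R ^ ((1-α)/2) / ((α-1)/2)) :=
    mul_nonneg (mul_nonneg (mul_nonneg hc.le (by linarith)) hC.le)
      (div_nonneg hRp.le (by linarith))
  have hα1p : (α:ℝ) + 1 ≠ 0 := by intro h; linarith
  have eA1 : (2*c) * (R ^ ((α+1)/2) / ((α+1)/2))
      = 2*(3-α)/(α+1) * R ^ ((α+1)/2) := by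
    rw [hc_def]; field_simp
  have eA2 : (c*(1+ε)*C_S) * (R ^ ((1-α)/2) / ((α-1)/2))
      = (3-α)*(1+ε) * (C_S * (R ^ ((1-α)/2)/(α-1))) := by
    rw [hc_def]; field_simp
  have eRHS : (3-α)/(2^(3-α)-1) *
        (32*R^((α+1)/2) + C_S*((1+ε)*2^(4-2*α)-(1-ε)) * ∫ x in Ioi (Real.sqrt R), x ^ (-α))
      = (3-α)/(4*w-1) *
        (32*R^((α+1)/2) + ((1+ε)*(4*w^2)-(1-ε)) * (C_S * (R^((1-α)/2)/(α-1)))) := by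
    rw [hw3, hw4, hJ]; ring
  calc ∫⁻ v, ENNReal.ofReal (|v| ^ (1 + α)) ∂μ
      = ∫⁻ v, (∫⁻ x, k v x) ∂μ := lintegral_congr (fun v => (hA v).symm)
    _ = ∫⁻ x, (∫⁻ v, k v x ∂μ) := lintegral_lintegral_swap hkm.aemeasurable
    _ ≤ ∫⁻ x, ((Ioc 0 R).indicator (fun x => ENNReal.ofReal ((2*c) * x ^ ((α-1)/2))) x
          + (Ioi R).indicator (fun x => ENNReal.ofReal ((c*(1+ε)*C_S) * x ^ (-(α+1)/2))) x) :=
        lintegral_mono hbd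
    _ = (∫⁻ x in Ioc 0 R, ENNReal.ofReal ((2*c) * x ^ ((α-1)/2)))
          + ∫⁻ x in Ioi R, ENNReal.ofReal ((c*(1+ε)*C_S) * x ^ (-(α+1)/2)) := by
        rw [lintegral_add_left hm1, lintegral_indicator measurableSet_Ioc,
          lintegral_indicator measurableSet_Ioi]
    _ = ENNReal.ofReal ((2*c) * (R ^ ((α+1)/2) / ((α+1)/2)))
          + ENNReal.ofReal ((c*(1+ε)*C_S) * (R ^ ((1-α)/2) / ((α-1)/2))) := by
        rw [hI1, hI2]
    _ = ENNReal.ofReal ((2*c) * (R ^ ((α+1)/2) / ((α+1)/2))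
          + (c*(1+ε)*C_S) * (R ^ ((1-α)/2) / ((α-1)/2))) :=
        (ENNReal.ofReal_add nn1 nn2).symm
    _ ≤ ENNReal.ofReal ((3 - α) / (2 ^ (3 - α) - 1) *
        (32 * R ^ ((α + 1) / 2) +
          C_S * ((1 + ε) * 2 ^ (4 - 2 * α) - (1 - ε)) *
            ∫ x in Set.Ioi (Real.sqrt R), x ^ (-α))) := by
        apply ENNReal.ofReal_le_ofReal
        rw [eA1, eA2, eRHS]
        exact main
end

section
/- Let g be a probability density on ℝ with zero mean, 1 < α < 2, 0 < δ < 2 − α, σ > 0, β ∈ [−1,1], and suppose ∫_ℝ |x|^{α+δ} |g(x) − γ_{σ,α,β}(x)| dx < ∞, where γ_{σ,α,β} is the α-stable density with characteristic function exp(−σ|ξ|^α(1 + iβ·sgn(ξ)tan(πα/2))). Then the remainder η(ξ) := ĝ(ξ) − 1 + σ|ξ|^α(1 + iβ·sgn(ξ)tan(πα/2)) satisfies |η(ξ)| ≤ C|ξ|^{α+δ} for some constant C > 0 and all ξ. -/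
open MeasureTheory Real
open Filter Topology

lemma aux_norm_exp_I_mul_sub_one_le (t : ℝ) :
    ‖Complex.exp (Complex.I * t) - 1‖ ≤ 2 * |t| := by
  have habs : ‖(Complex.I * (t : ℂ))‖ = |t| := by simp
  rcases le_or_gt (|t|) 1 with h | h
  · have h2 := Complex.norm_exp_sub_one_le (x := Complex.I * t)
      (by simpa using h)
    rwa [habs] at h2
  · have h1 : ‖Complex.exp (Complex.I * t)‖ = 1 := by
      rw [Complex.norm_exp]; simp
    calc ‖Complex.exp (Complex.I * t) - 1‖ ≤ ‖Complex.exp (Complex.I * t)‖ + ‖(1:ℂ)‖ :=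
          norm_sub_le _ _
      _ = 2 := by rw [h1, norm_one]; norm_num
      _ ≤ 2 * |t| := by nlinarith

lemma aux_norm_exp_I_mul_sub_one_sub_le {p : ℝ} (hp1 : 1 ≤ p) (hp2 : p ≤ 2) (t : ℝ) :
    ‖Complex.exp (Complex.I * t) - 1 - Complex.I * t‖ ≤ 3 * |t| ^ p := by
  have habs : ‖(Complex.I * (t : ℂ))‖ = |t| := by simp
  rcases eq_or_ne t 0 with rfl | ht
  · simp [Real.zero_rpow (by linarith : p ≠ 0)]
  have ht0 : 0 < |t| := abs_pos.2 ht
  rcases le_or_gt (|t|) 1 with h | h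
  · have h2 := Complex.norm_exp_sub_one_sub_id_le (x := Complex.I * t)
      (by simpa using h)
    rw [habs] at h2
    have h4 : |t| ^ ((2:ℝ)) ≤ |t| ^ p := Real.rpow_le_rpow_of_exponent_ge ht0 h hp2
    have h5 : (0:ℝ) ≤ |t| ^ p := Real.rpow_nonneg (abs_nonneg t) p
    calc ‖Complex.exp (Complex.I * t) - 1 - Complex.I * t‖ ≤ |t| ^ (2:ℕ) := h2
      _ = |t| ^ ((2:ℝ)) := by rw [← Real.rpow_natCast]; norm_num
      _ ≤ |t| ^ p := h4
      _ ≤ 3 * |t| ^ p := by linarith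
  · have h1 : ‖Complex.exp (Complex.I * t)‖ = 1 := by
      rw [Complex.norm_exp]; simp
    have h4 : |t| ≤ |t| ^ p :=
      calc |t| = |t| ^ (1:ℝ) := (Real.rpow_one _).symm
        _ ≤ |t| ^ p := Real.rpow_le_rpow_of_exponent_le h.le hp1
    have h7 : ‖Complex.exp (Complex.I * t) - 1‖ ≤ ‖Complex.exp (Complex.I * t)‖ + ‖(1:ℂ)‖ :=
      norm_sub_le _ _
    rw [h1, norm_one] at h7
    calc ‖Complex.exp (Complex.I * t) - 1 - Complex.I * t‖
        ≤ ‖Complex.exp (Complex.I * t) - 1‖ + ‖Complex.I * (t:ℂ)‖ := norm_sub_le _ _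
      _ ≤ 2 + |t| := by rw [habs]; linarith
      _ ≤ 3 * |t| ^ p := by nlinarith

lemma aux_norm_exp_neg_sq {z : ℂ} (hz : 0 ≤ z.re) :
    ‖Complex.exp (-z) - 1 + z‖ ≤ 3 * ‖z‖ ^ 2 := by
  rcases le_or_gt (‖z‖) 1 with h | h
  · have h2 := Complex.norm_exp_sub_one_sub_id_le (x := -z)
      (by simpa [norm_neg] using h)
    simp only [norm_neg] at h2
    have heq : Complex.exp (-z) - 1 - -z = Complex.exp (-z) - 1 + z := by ring
    rw [heq] at h2
    nlinarith [sq_nonneg ‖z‖, norm_nonneg z]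
  · have hexp : ‖Complex.exp (-z)‖ ≤ 1 := by
      rw [Complex.norm_exp]
      simp only [Complex.neg_re]
      exact Real.exp_le_one_iff.2 (by linarith)
    have h7 : ‖Complex.exp (-z) - 1‖ ≤ ‖Complex.exp (-z)‖ + ‖(1:ℂ)‖ := norm_sub_le _ _
    rw [norm_one] at h7
    calc ‖Complex.exp (-z) - 1 + z‖ ≤ ‖Complex.exp (-z) - 1‖ + ‖z‖ := norm_add_le _ _
      _ ≤ 2 + ‖z‖ := by linarith
      _ ≤ 3 * ‖z‖ ^ 2 := by nlinarith

lemma aux_norm_exp_neg_lin {z : ℂ} (hz : 0 ≤ z.re) :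
    ‖Complex.exp (-z) - 1 + z‖ ≤ 2 + ‖z‖ := by
  have hexp : ‖Complex.exp (-z)‖ ≤ 1 := by
    rw [Complex.norm_exp]
    simp only [Complex.neg_re]
    exact Real.exp_le_one_iff.2 (by linarith)
  have h7 : ‖Complex.exp (-z) - 1‖ ≤ ‖Complex.exp (-z)‖ + ‖(1:ℂ)‖ := norm_sub_le _ _
  rw [norm_one] at h7
  calc ‖Complex.exp (-z) - 1 + z‖ ≤ ‖Complex.exp (-z) - 1‖ + ‖z‖ := norm_add_le _ _
    _ ≤ 2 + ‖z‖ := by linarith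

lemma aux_exp_re (x ξ : ℝ) : ‖Complex.exp (Complex.I * x * ξ)‖ = 1 := by
  rw [Complex.norm_exp]
  simp [Complex.mul_re]

lemma aux_sign_abs_le (t : ℝ) : |Real.sign t| ≤ 1 := by
  rcases lt_trichotomy t 0 with h | h | h
  · rw [Real.sign_of_neg h]; norm_num
  · subst h; simp [Real.sign_zero]
  · rw [Real.sign_of_pos h]; norm_num

lemma aux_norm_w (β s T : ℝ) (hβ : |β| ≤ 1) (hs : |s| ≤ 1) :
    ‖(1 + Complex.I * (β:ℂ) * (s:ℂ) * (T:ℂ) : ℂ)‖ ≤ 1 + |T| := by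
  have h1 : ‖(Complex.I * (β:ℂ) * (s:ℂ) * (T:ℂ) : ℂ)‖ = |β| * |s| * |T| := by
    simp [norm_mul]
  calc ‖(1 + Complex.I * (β:ℂ) * (s:ℂ) * (T:ℂ) : ℂ)‖
      ≤ ‖(1:ℂ)‖ + ‖(Complex.I * (β:ℂ) * (s:ℂ) * (T:ℂ) : ℂ)‖ := norm_add_le _ _
    _ ≤ 1 + |T| := by
        rw [norm_one, h1]
        have h3 : |β| * |s| ≤ 1 := mul_le_one₀ hβ (abs_nonneg s) hs
        have h2 : |β| * |s| * |T| ≤ 1 * |T| := mul_le_mul_of_nonneg_right h3 (abs_nonneg T)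
        rw [one_mul] at h2
        linarith

lemma aux_int_exp (f : ℝ → ℝ) (hf : Integrable f) (ξ : ℝ) :
    Integrable fun x : ℝ => Complex.exp (Complex.I * x * ξ) * (f x : ℂ) := by
  have hcont : Continuous fun x : ℝ => Complex.exp (Complex.I * x * ξ) := by fun_prop
  refine Integrable.mono' hf.abs ?_ (Filter.Eventually.of_forall fun x => ?_)
  · exact hcont.aestronglyMeasurable.mul
      (Complex.continuous_ofReal.comp_aestronglyMeasurable hf.1)
  · rw [norm_mul, aux_exp_re, one_mul, Complex.norm_real]
    exact le_refl _

lemma aux_mean_zero (σ α β : ℝ) (hσ : 0 < σ) (hα1 : 1 < α) (hβ : |β| ≤ 1)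
    (γ : ℝ → ℝ) (hγ_int : Integrable γ) (hγ_mass : ∫ x, γ x = 1)
    (hxγ_int : Integrable fun x => x * γ x)
    (hγ_char : ∀ ξ : ℝ, (∫ x : ℝ, Complex.exp (Complex.I * x * ξ) * (γ x : ℂ)) =
      Complex.exp (-((σ * |ξ| ^ α : ℝ) : ℂ) *
        (1 + Complex.I * (β : ℂ) * ((Real.sign ξ) : ℂ) * ((Real.tan (π * α / 2)) : ℂ)))) :
    ∫ x, x * γ x = 0 := by
  set T : ℝ := Real.tan (π * α / 2) with hT
  set K : ℝ := 1 + |T| with hKdef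
  have hK : 0 < K := by positivity
  set m : ℝ := ∫ x, x * γ x with hm
  set seq : ℕ → ℝ := fun n => 1 / ((n:ℝ) + 1) with hseqdef
  have hseq_pos : ∀ n : ℕ, 0 < seq n := fun n => by positivity
  set Fn : ℕ → ℂ := fun n =>
    ((n:ℂ) + 1) * ((∫ x : ℝ, Complex.exp (Complex.I * x * (seq n)) * (γ x : ℂ)) - 1) with hFn
  have int_coe : Integrable fun x : ℝ => (γ x : ℂ) := hγ_int.ofReal
  have hcoe1 : (∫ x : ℝ, (γ x : ℂ)) = 1 := by
    rw [show (∫ x : ℝ, (γ x : ℂ)) = ((∫ x : ℝ, γ x : ℝ) : ℂ) from integral_ofReal, hγ_mass,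
      Complex.ofReal_one]
  -- rewrite Fn as an integral
  have key : ∀ n, Fn n =
      ∫ x : ℝ, ((n:ℂ) + 1) * ((Complex.exp (Complex.I * x * (seq n)) - 1) * (γ x : ℂ)) := by
    intro n
    have e1 : ∫ x : ℝ, (Complex.exp (Complex.I * x * (seq n)) - 1) * (γ x : ℂ)
        = (∫ x : ℝ, Complex.exp (Complex.I * x * (seq n)) * (γ x : ℂ)) - 1 := by
      rw [show (fun x : ℝ => (Complex.exp (Complex.I * x * (seq n)) - 1) * (γ x : ℂ))
          = fun x : ℝ => Complex.exp (Complex.I * x * (seq n)) * (γ x : ℂ) - (γ x : ℂ) from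
        funext fun x => by ring]
      rw [integral_sub (aux_int_exp γ hγ_int (seq n)) int_coe, hcoe1]
    simp only [hFn]
    rw [← e1, ← integral_const_mul]
  -- Claim 1 : Fn → I * m
  have claim1 : Tendsto Fn atTop (𝓝 (Complex.I * (m:ℂ))) := by
    have hlim : Tendsto (fun n : ℕ => ∫ x : ℝ,
        ((n:ℂ) + 1) * ((Complex.exp (Complex.I * x * (seq n)) - 1) * (γ x : ℂ))) atTop
        (𝓝 (∫ x : ℝ, (Complex.I * (x:ℂ)) * (γ x : ℂ))) := by
      apply tendsto_integral_of_dominated_convergence (fun x => 2 * |x * γ x|)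
      · intro n
        have hcont : Continuous fun x : ℝ => Complex.exp (Complex.I * x * (seq n)) := by
          fun_prop
        exact ((hcont.aestronglyMeasurable.sub aestronglyMeasurable_const).mul
          (Complex.continuous_ofReal.comp_aestronglyMeasurable hγ_int.1)).const_mul _
      · exact hxγ_int.abs.const_mul 2
      · intro n
        refine Filter.Eventually.of_forall fun x => ?_
        have harg : Complex.I * (x:ℂ) * ((seq n : ℝ):ℂ) = Complex.I * ((x * seq n : ℝ):ℂ) := by
          push_cast; ring
        have h1 : ‖Complex.exp (Complex.I * x * (seq n)) - 1‖ ≤ 2 * |x * seq n| := by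
          rw [harg]; exact aux_norm_exp_I_mul_sub_one_le (x * seq n)
        have hne : ((n:ℝ) + 1) ≠ 0 := by positivity
        have h2 : ‖((n:ℂ) + 1)‖ = (n:ℝ) + 1 := by
          rw [show ((n:ℂ) + 1) = (((n:ℝ) + 1 : ℝ):ℂ) by push_cast; ring, Complex.norm_real,
            Real.norm_eq_abs, abs_of_pos (by positivity)]
        rw [norm_mul, norm_mul, h2, Complex.norm_real]
        calc ((n:ℝ) + 1) * (‖Complex.exp (Complex.I * x * (seq n)) - 1‖ * |γ x|)
            ≤ ((n:ℝ) + 1) * ((2 * |x * seq n|) * |γ x|) := by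
              apply mul_le_mul_of_nonneg_left _ (by positivity)
              exact mul_le_mul_of_nonneg_right h1 (abs_nonneg _)
          _ = 2 * |x * γ x| := by
              rw [abs_mul, abs_mul, abs_of_pos (hseq_pos n)]
              simp only [hseqdef]
              field_simp
      · refine Filter.Eventually.of_forall fun x => ?_
        -- pointwise limit via derivative of s ↦ exp(I x s) at 0
        have h1 : HasDerivAt (fun s : ℝ => ((s:ℝ):ℂ)) 1 0 := by
          exact Complex.ofRealCLM.hasDerivAt (x := (0:ℝ))
        have h2 := h1.const_mul (Complex.I * (x:ℂ))
        have h3 : HasDerivAt (fun s : ℝ => Complex.exp (Complex.I * x * s))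
            (Complex.I * (x:ℂ)) 0 := by
          simpa using h2.cexp
        rw [hasDerivAt_iff_tendsto_slope] at h3
        have hseq_t : Tendsto seq atTop (𝓝[≠] (0:ℝ)) := by
          refine tendsto_nhdsWithin_of_tendsto_nhds_of_eventually_within _
            tendsto_one_div_add_atTop_nhds_zero_nat
            (Filter.Eventually.of_forall fun n => ?_)
          exact Set.mem_compl_singleton_iff.mpr (by positivity)
        have h4 := h3.comp hseq_t
        have hslope : ∀ n, slope (fun s : ℝ => Complex.exp (Complex.I * x * s)) 0 (seq n)
            = ((n:ℂ) + 1) * (Complex.exp (Complex.I * x * (seq n)) - 1) := by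
          intro n
          have hne : ((n:ℝ) + 1) ≠ 0 := by positivity
          rw [slope_def_module]
          rw [sub_zero]
          rw [show ((seq n : ℝ))⁻¹ = (n:ℝ) + 1 by rw [hseqdef]; field_simp]
          rw [show Complex.exp (Complex.I * x * ((0:ℝ):ℂ)) = 1 by simp]
          rw [Complex.real_smul]
          push_cast
          ring
        have h5 : Tendsto (fun n : ℕ => ((n:ℂ) + 1) * (Complex.exp (Complex.I * x * (seq n)) - 1))
            atTop (𝓝 (Complex.I * (x:ℂ))) := by
          refine h4.congr fun n => ?_
          exact hslope n
        have h6 := h5.mul_const ((γ x : ℂ))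
        refine h6.congr fun n => ?_
        ring
    have hval : (∫ x : ℝ, (Complex.I * (x:ℂ)) * (γ x : ℂ)) = Complex.I * (m:ℂ) := by
      rw [show (fun x : ℝ => (Complex.I * (x:ℂ)) * (γ x : ℂ))
          = fun x : ℝ => Complex.I * ((x * γ x : ℝ):ℂ) by funext x; push_cast; ring]
      rw [integral_const_mul,
        show (∫ x : ℝ, ((x * γ x : ℝ):ℂ)) = ((∫ x : ℝ, x * γ x : ℝ) : ℂ) from integral_ofReal]
    rw [hval] at hlim
    refine Tendsto.congr (fun n => (key n).symm) hlim
  -- Claim 2 : Fn → 0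
  have claim2 : Tendsto Fn atTop (𝓝 0) := by
    have hyn : ∀ n : ℕ, (0:ℝ) < (n:ℝ) + 1 := fun n => by positivity
    have hcomp : Tendsto (fun n : ℕ => ((n:ℝ) + 1)) atTop atTop :=
      tendsto_atTop_add_const_right atTop 1 tendsto_natCast_atTop_atTop
    have hFn_eq : ∀ n, Fn n = ((n:ℂ) + 1) *
        (Complex.exp (-((((σ * |seq n| ^ α : ℝ)) : ℂ) *
          (1 + Complex.I * (β:ℂ) * ((Real.sign (seq n)):ℂ) * (T:ℂ)))) - 1) := by
      intro n
      simp only [hFn]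
      rw [hγ_char (seq n), neg_mul]
    have hsa : ∀ n : ℕ, |seq n| ^ α = ((n:ℝ) + 1) ^ (-α) := by
      intro n
      rw [abs_of_pos (hseq_pos n), hseqdef]
      simp only [one_div]
      rw [Real.inv_rpow (hyn n).le, ← Real.rpow_neg (hyn n).le]
    have hcnorm : ∀ n : ℕ, ‖(((σ * |seq n| ^ α : ℝ)) : ℂ) *
        (1 + Complex.I * (β:ℂ) * ((Real.sign (seq n)):ℂ) * (T:ℂ))‖
        ≤ σ * K * ((n:ℝ) + 1) ^ (-α) := by
      intro n
      rw [norm_mul, Complex.norm_real, Real.norm_eq_abs]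
      have h1 : |σ * |seq n| ^ α| = σ * |seq n| ^ α := by
        rw [abs_of_nonneg]
        positivity
      rw [h1, hsa n]
      have h2 := aux_norm_w β (Real.sign (seq n)) T hβ (aux_sign_abs_le _)
      calc σ * ((n:ℝ) + 1) ^ (-α) * ‖(1 + Complex.I * (β:ℂ) * ((Real.sign (seq n)):ℂ) * (T:ℂ))‖
          ≤ σ * ((n:ℝ) + 1) ^ (-α) * K := by
            apply mul_le_mul_of_nonneg_left _ (by positivity)
            rw [hKdef]; exact h2
        _ = σ * K * ((n:ℝ) + 1) ^ (-α) := by ring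
    have htend0 : Tendsto (fun n : ℕ => σ * K * ((n:ℝ) + 1) ^ (-α)) atTop (𝓝 0) := by
      have h := (tendsto_rpow_neg_atTop (by linarith : (0:ℝ) < α)).comp hcomp
      have h2 := h.const_mul (σ * K)
      simpa using h2
    have hsmall : ∀ᶠ n : ℕ in atTop, σ * K * ((n:ℝ) + 1) ^ (-α) ≤ 1 :=
      htend0.eventually (eventually_le_nhds (by norm_num))
    have hb : Tendsto (fun n : ℕ => 2 * (σ * K) * ((n:ℝ) + 1) ^ (1 - α)) atTop (𝓝 0) := by
      have h := (tendsto_rpow_neg_atTop (by linarith : (0:ℝ) < α - 1)).comp hcomp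
      have h' : Tendsto (fun n : ℕ => ((n:ℝ) + 1) ^ (1 - α)) atTop (𝓝 0) := by
        refine h.congr fun n => ?_
        simp only [Function.comp]
        rw [show -(α - 1) = 1 - α by ring]
      have h2 := h'.const_mul (2 * (σ * K))
      simpa using h2
    apply squeeze_zero_norm' ?_ hb
    filter_upwards [hsmall] with n hn
    rw [hFn_eq n]
    have h2 : ‖((n:ℂ) + 1)‖ = (n:ℝ) + 1 := by
      rw [show ((n:ℂ) + 1) = (((n:ℝ) + 1 : ℝ):ℂ) by push_cast; ring, Complex.norm_real,
        Real.norm_eq_abs, abs_of_pos (hyn n)]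
    rw [norm_mul, h2]
    have h3 : ‖Complex.exp (-((((σ * |seq n| ^ α : ℝ)) : ℂ) *
        (1 + Complex.I * (β:ℂ) * ((Real.sign (seq n)):ℂ) * (T:ℂ)))) - 1‖
        ≤ 2 * (σ * K * ((n:ℝ) + 1) ^ (-α)) := by
      have h4 := Complex.norm_exp_sub_one_le
        (x := -((((σ * |seq n| ^ α : ℝ)) : ℂ) *
          (1 + Complex.I * (β:ℂ) * ((Real.sign (seq n)):ℂ) * (T:ℂ))))
        (by rw [norm_neg]; exact le_trans (hcnorm n) hn)
      simp only [norm_neg] at h4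
      exact le_trans h4 (by linarith [hcnorm n])
    calc ((n:ℝ) + 1) * ‖Complex.exp (-((((σ * |seq n| ^ α : ℝ)) : ℂ) *
          (1 + Complex.I * (β:ℂ) * ((Real.sign (seq n)):ℂ) * (T:ℂ)))) - 1‖
        ≤ ((n:ℝ) + 1) * (2 * (σ * K * ((n:ℝ) + 1) ^ (-α))) :=
          mul_le_mul_of_nonneg_left h3 (hyn n).le
      _ = 2 * (σ * K) * (((n:ℝ) + 1) * ((n:ℝ) + 1) ^ (-α)) := by ring
      _ = 2 * (σ * K) * ((n:ℝ) + 1) ^ (1 - α) := by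
          rw [show ((n:ℝ) + 1) * ((n:ℝ) + 1) ^ (-α) = ((n:ℝ) + 1) ^ (1 - α) from by
            rw [show (1:ℝ) - α = 1 + (-α) by ring, Real.rpow_add (hyn n), Real.rpow_one]]
  have : Complex.I * (m:ℂ) = 0 := tendsto_nhds_unique claim1 claim2
  have hm0 : (m:ℂ) = 0 := by
    rcases mul_eq_zero.1 this with h | h
    · exact absurd h Complex.I_ne_zero
    · exact h
  exact_mod_cast hm0



/-- If a zero-mean probability density `g` satisfies
`∫ |x|^{α+δ} |g(x) − γ_{σ,α,β}(x)| dx < ∞`, where `γ_{σ,α,β}` is the α-stable density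
with characteristic function `exp(−σ|ξ|^α(1 + iβ sgn(ξ) tan(πα/2)))`, then the remainder
`η(ξ) = ĝ(ξ) − 1 + σ|ξ|^α(1 + iβ sgn(ξ) tan(πα/2))` satisfies `|η(ξ)| ≤ C|ξ|^{α+δ}`. -/
theorem fda_of_order_delta
    (g : ℝ → ℝ) (hg_meas : Measurable g) (hg_nonneg : ∀ x, 0 ≤ g x)
    (hg_int : Integrable g) (hg_mass : ∫ x, g x = 1)
    (hg_mean : Integrable (fun x => x * g x)) (hg_mean0 : ∫ x, x * g x = 0)
    (σ α β δ : ℝ) (hσ : 0 < σ) (hα1 : 1 < α) (hα2 : α < 2)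
    (hδ0 : 0 < δ) (hδ : δ < 2 - α) (hβ : β ∈ Set.Icc (-1 : ℝ) 1)
    (γ : ℝ → ℝ) (hγ_nonneg : ∀ x, 0 ≤ γ x) (hγ_int : Integrable γ)
    (hγ_char : ∀ ξ : ℝ, (∫ x : ℝ, Complex.exp (Complex.I * x * ξ) * (γ x : ℂ)) =
      Complex.exp (-((σ * |ξ| ^ α : ℝ) : ℂ) *
        (1 + Complex.I * (β : ℂ) * ((Real.sign ξ) : ℂ) * ((Real.tan (π * α / 2)) : ℂ))))
    (hclose : Integrable (fun x => |x| ^ (α + δ) * |g x - γ x|)) :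
    ∃ C : ℝ, 0 < C ∧ ∀ ξ : ℝ,
      ‖(∫ x : ℝ, Complex.exp (Complex.I * x * ξ) * (g x : ℂ)) - 1 +
          ((σ * |ξ| ^ α : ℝ) : ℂ) *
            (1 + Complex.I * (β : ℂ) * ((Real.sign ξ) : ℂ) *
              ((Real.tan (π * α / 2)) : ℂ))‖ ≤ C * |ξ| ^ (α + δ) := by
  have hβ' : |β| ≤ 1 := abs_le.mpr ⟨hβ.1, hβ.2⟩
  set p : ℝ := α + δ with hpdef
  have hp1 : 1 ≤ p := by simp only [hpdef]; linarith
  have hp2 : p ≤ 2 := by simp only [hpdef]; linarith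
  set T : ℝ := Real.tan (π * α / 2) with hT
  set K : ℝ := 1 + |T| with hKdef
  have hK : 0 < K := by positivity
  -- mass of γ is 1
  have hγ_mass : ∫ x, γ x = 1 := by
    have h0 := hγ_char 0
    simp only [Complex.ofReal_zero, mul_zero, Complex.exp_zero, one_mul, abs_zero,
      Real.zero_rpow (by linarith : α ≠ 0), neg_zero, zero_mul] at h0
    rw [show (∫ x : ℝ, ((γ x : ℝ):ℂ)) = ((∫ x, γ x : ℝ):ℂ) from integral_ofReal] at h0
    exact_mod_cast h0
  have hd_int : Integrable (fun x => g x - γ x) := hg_int.sub hγ_int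
  have hd_mass : ∫ x, (g x - γ x) = 0 := by
    rw [integral_sub hg_int hγ_int, hg_mass, hγ_mass]; ring
  have hxd_int : Integrable (fun x => x * (g x - γ x)) := by
    refine Integrable.mono' (hd_int.abs.add hclose) ?_
      (Filter.Eventually.of_forall fun x => ?_)
    · exact aestronglyMeasurable_id.mul hd_int.1
    · rw [Real.norm_eq_abs, abs_mul]
      rcases le_or_gt (|x|) 1 with h | h
      · have h1 : |x| * |g x - γ x| ≤ 1 * |g x - γ x| :=
          mul_le_mul_of_nonneg_right h (abs_nonneg _)
        have h2 : (0:ℝ) ≤ |x| ^ p * |g x - γ x| := by positivity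
        rw [one_mul] at h1
        simp only [Pi.add_apply]
        linarith
      · have h1 : |x| ≤ |x| ^ p :=
          calc |x| = |x| ^ (1:ℝ) := (Real.rpow_one _).symm
            _ ≤ |x| ^ p := Real.rpow_le_rpow_of_exponent_le h.le hp1
        have h2 : |x| * |g x - γ x| ≤ |x| ^ p * |g x - γ x| :=
          mul_le_mul_of_nonneg_right h1 (abs_nonneg _)
        have h3 : (0:ℝ) ≤ |g x - γ x| := abs_nonneg _
        simp only [Pi.add_apply]
        linarith
  have hxγ_int : Integrable (fun x => x * γ x) := by
    refine (hg_mean.sub hxd_int).congr (Filter.Eventually.of_forall fun x => ?_)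
    simp only [Pi.sub_apply]
    ring
  have hγ_mean : ∫ x, x * γ x = 0 :=
    aux_mean_zero σ α β hσ hα1 hβ' γ hγ_int hγ_mass hxγ_int hγ_char
  have hxd_mass : ∫ x, x * (g x - γ x) = 0 := by
    rw [show (fun x => x * (g x - γ x)) = fun x => x * g x - x * γ x from
      funext fun x => by ring]
    rw [integral_sub hg_mean hxγ_int, hg_mean0, hγ_mean, sub_zero]
  set A : ℝ := ∫ x, |x| ^ p * |g x - γ x| with hA
  have hA0 : 0 ≤ A := integral_nonneg fun x => by positivity
  have hσK : 0 < σ * K := mul_pos hσ hK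
  refine ⟨3 * A + 3 * (σ * K) ^ 2 + (2 + σ * K) + 1,
    by nlinarith [sq_nonneg (σ * K)], fun ξ => ?_⟩
  by_cases hξ : ξ = 0
  · subst hξ
    have h1 : (σ * |(0:ℝ)| ^ α : ℝ) = 0 := by
      rw [abs_zero, Real.zero_rpow (by linarith : α ≠ 0), mul_zero]
    have hg0 : (∫ x : ℝ, Complex.exp (Complex.I * x * ((0:ℝ):ℂ)) * (g x : ℂ)) = 1 := by
      simp only [Complex.ofReal_zero, mul_zero, Complex.exp_zero, one_mul]
      rw [show (∫ x : ℝ, ((g x : ℝ):ℂ)) = ((∫ x, g x : ℝ):ℂ) from integral_ofReal, hg_mass,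
        Complex.ofReal_one]
    rw [h1]
    simp only [Complex.ofReal_zero, mul_zero, Complex.exp_zero, one_mul, zero_mul, abs_zero]
    rw [show (∫ x : ℝ, ((g x : ℝ):ℂ)) = ((∫ x, g x : ℝ):ℂ) from integral_ofReal, hg_mass,
      Complex.ofReal_one]
    rw [Real.zero_rpow (by linarith : p ≠ 0), mul_zero]
    simp
  · have hξ0 : 0 < |ξ| := abs_pos.2 hξ
    set w : ℂ := 1 + Complex.I * (β:ℂ) * ((Real.sign ξ):ℂ) * (T:ℂ) with hwdef
    set r : ℝ := σ * |ξ| ^ α with hrdef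
    have hr0 : 0 ≤ r := by positivity
    have hwnorm : ‖w‖ ≤ K := by
      rw [hwdef, hKdef]; exact aux_norm_w β _ T hβ' (aux_sign_abs_le ξ)
    have hwre : w.re = 1 := by
      rw [hwdef, show Complex.I * (β:ℂ) * ((Real.sign ξ):ℂ) * (T:ℂ)
          = Complex.I * ((β * Real.sign ξ * T : ℝ):ℂ) by push_cast; ring]
      simp
    set z : ℂ := (r:ℂ) * w with hzdef
    have hzre : 0 ≤ z.re := by
      rw [hzdef]
      simp only [Complex.mul_re, Complex.ofReal_re, Complex.ofReal_im, zero_mul, sub_zero, hwre,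
        mul_one]
      exact hr0
    have hznorm : ‖z‖ ≤ r * K := by
      rw [hzdef, norm_mul, Complex.norm_real, Real.norm_eq_abs, abs_of_nonneg hr0]
      exact mul_le_mul_of_nonneg_left hwnorm hr0
    have int_γ := aux_int_exp γ hγ_int ξ
    -- pointwise bound for the main integrand
    have hptwise : ∀ x : ℝ, ‖(Complex.exp (Complex.I * x * ξ) - 1 - Complex.I * x * ξ) *
        ((g x - γ x : ℝ) : ℂ)‖ ≤ 3 * |ξ| ^ p * (|x| ^ p * |g x - γ x|) := by
      intro x
      rw [norm_mul, Complex.norm_real, Real.norm_eq_abs]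
      have harg : Complex.I * (x:ℂ) * (ξ:ℂ) = Complex.I * ((x * ξ : ℝ):ℂ) := by
        push_cast; ring
      have h1 : ‖Complex.exp (Complex.I * x * ξ) - 1 - Complex.I * x * ξ‖ ≤ 3 * |x * ξ| ^ p := by
        rw [harg]; exact aux_norm_exp_I_mul_sub_one_sub_le hp1 hp2 (x * ξ)
      calc ‖Complex.exp (Complex.I * x * ξ) - 1 - Complex.I * x * ξ‖ * |g x - γ x|
          ≤ (3 * |x * ξ| ^ p) * |g x - γ x| :=
            mul_le_mul_of_nonneg_right h1 (abs_nonneg _)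
        _ = 3 * |ξ| ^ p * (|x| ^ p * |g x - γ x|) := by
            rw [abs_mul, Real.mul_rpow (abs_nonneg x) (abs_nonneg ξ)]; ring
    have int_f1 : Integrable (fun x : ℝ =>
        (Complex.exp (Complex.I * x * ξ) - 1 - Complex.I * x * ξ) * ((g x - γ x : ℝ) : ℂ)) := by
      refine Integrable.mono' (hclose.const_mul (3 * |ξ| ^ p)) ?_
        (Filter.Eventually.of_forall fun x => ?_)
      · have hcont : Continuous fun x : ℝ =>
            Complex.exp (Complex.I * x * ξ) - 1 - Complex.I * x * ξ := by fun_prop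
        exact hcont.aestronglyMeasurable.mul
          (Complex.continuous_ofReal.comp_aestronglyMeasurable hd_int.1)
      · exact le_trans (hptwise x) (le_of_eq (by ring))
    have hdC : Integrable (fun x : ℝ => ((g x - γ x : ℝ) : ℂ)) := hd_int.ofReal
    have hxdC : Integrable (fun x : ℝ => ((x * (g x - γ x) : ℝ) : ℂ)) := hxd_int.ofReal
    have hsum : Integrable (fun x : ℝ => ((g x - γ x : ℝ) : ℂ) +
        (Complex.I * (ξ:ℂ)) * ((x * (g x - γ x) : ℝ) : ℂ)) :=
      hdC.add (hxdC.const_mul (Complex.I * (ξ:ℂ)))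
    have int_f2 : Integrable (fun x : ℝ =>
        (1 + Complex.I * x * ξ) * ((g x - γ x : ℝ) : ℂ)) := by
      refine hsum.congr (Filter.Eventually.of_forall fun x => ?_)
      push_cast; ring
    have hsplit : (∫ x : ℝ, Complex.exp (Complex.I * x * ξ) * (g x : ℂ))
        = (∫ x : ℝ, (Complex.exp (Complex.I * x * ξ) - 1 - Complex.I * x * ξ) *
            ((g x - γ x : ℝ) : ℂ))
          + ((∫ x : ℝ, (1 + Complex.I * x * ξ) * ((g x - γ x : ℝ) : ℂ))
          + (∫ x : ℝ, Complex.exp (Complex.I * x * ξ) * (γ x : ℂ))) := by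
      have int_f23 : Integrable (fun x : ℝ => (1 + Complex.I * x * ξ) * ((g x - γ x : ℝ) : ℂ)
          + Complex.exp (Complex.I * x * ξ) * (γ x : ℂ)) := int_f2.add int_γ
      rw [← integral_add int_f2 int_γ, ← integral_add int_f1 int_f23]
      congr 1; funext x; push_cast; ring
    have hf2val : (∫ x : ℝ, (1 + Complex.I * x * ξ) * ((g x - γ x : ℝ) : ℂ)) = 0 := by
      rw [show (fun x : ℝ => (1 + Complex.I * x * ξ) * ((g x - γ x : ℝ) : ℂ))
          = fun x : ℝ => ((g x - γ x : ℝ):ℂ) + (Complex.I * (ξ:ℂ)) *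
            ((x * (g x - γ x) : ℝ):ℂ) from funext fun x => by push_cast; ring]
      rw [integral_add hdC (hxdC.const_mul (Complex.I * (ξ:ℂ))), integral_const_mul]
      rw [show (∫ x : ℝ, ((g x - γ x : ℝ):ℂ)) = ((∫ x, (g x - γ x) : ℝ):ℂ) from integral_ofReal]
      rw [show (∫ x : ℝ, ((x * (g x - γ x) : ℝ):ℂ)) = ((∫ x, x * (g x - γ x) : ℝ):ℂ) from
        integral_ofReal]
      rw [hd_mass, hxd_mass]
      simp
    have hf1bound : ‖∫ x : ℝ, (Complex.exp (Complex.I * x * ξ) - 1 - Complex.I * x * ξ) *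
        ((g x - γ x : ℝ) : ℂ)‖ ≤ 3 * |ξ| ^ p * A := by
      have h := norm_integral_le_of_norm_le (hclose.const_mul (3 * |ξ| ^ p))
        (Filter.Eventually.of_forall fun x => le_trans (hptwise x) (le_of_eq (by ring)))
      rw [integral_const_mul] at h
      exact h
    have hchar := hγ_char ξ
    rw [neg_mul] at hchar
    -- second piece bound
    have hsecond : ‖Complex.exp (-z) - 1 + z‖ ≤ (3 * (σ * K) ^ 2 + (2 + σ * K)) * |ξ| ^ p := by
      rcases le_or_gt (|ξ|) 1 with hsm | hbg
      · have h := aux_norm_exp_neg_sq hzre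
        have h1 : ‖z‖ ^ 2 ≤ (r * K) ^ 2 := by
          apply sq_le_sq' _ hznorm
          have := norm_nonneg z
          nlinarith
        have h2 : (|ξ| ^ α) ^ 2 = |ξ| ^ (α * 2) := by
          rw [Real.rpow_mul (abs_nonneg ξ), ← Real.rpow_natCast (|ξ| ^ α) 2]
          norm_num
        have h3 : |ξ| ^ (α * 2) ≤ |ξ| ^ p :=
          Real.rpow_le_rpow_of_exponent_ge hξ0 hsm (by simp only [hpdef]; linarith)
        have h4 : (r * K) ^ 2 = (σ * K) ^ 2 * (|ξ| ^ α) ^ 2 := by rw [hrdef]; ring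
        have h5 : (0:ℝ) ≤ |ξ| ^ p := Real.rpow_nonneg (abs_nonneg ξ) p
        calc ‖Complex.exp (-z) - 1 + z‖ ≤ 3 * ‖z‖ ^ 2 := h
          _ ≤ 3 * ((σ * K) ^ 2 * (|ξ| ^ α) ^ 2) := by rw [← h4]; linarith
          _ = 3 * (σ * K) ^ 2 * (|ξ| ^ (α * 2)) := by rw [← h2]; ring
          _ ≤ 3 * (σ * K) ^ 2 * (|ξ| ^ p) :=
            mul_le_mul_of_nonneg_left h3 (by positivity)
          _ ≤ (3 * (σ * K) ^ 2 + (2 + σ * K)) * |ξ| ^ p := by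
            have h6 : (0:ℝ) ≤ (2 + σ * K) * (|ξ| ^ p) := by positivity
            rw [add_mul]
            linarith
      · have h := aux_norm_exp_neg_lin hzre
        have h1 : (1:ℝ) ≤ |ξ| ^ p :=
          calc (1:ℝ) = |ξ| ^ (0:ℝ) := (Real.rpow_zero _).symm
            _ ≤ |ξ| ^ p := Real.rpow_le_rpow_of_exponent_le hbg.le (by linarith)
        have h2 : |ξ| ^ α ≤ |ξ| ^ p :=
          Real.rpow_le_rpow_of_exponent_le hbg.le (by simp only [hpdef]; linarith)
        calc ‖Complex.exp (-z) - 1 + z‖ ≤ 2 + ‖z‖ := h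
          _ ≤ 2 + r * K := by linarith
          _ = 2 + σ * K * (|ξ| ^ α) := by rw [hrdef]; ring
          _ ≤ 2 * (|ξ| ^ p) + σ * K * (|ξ| ^ p) := by
            have h7 := mul_le_mul_of_nonneg_left h2 hσK.le
            linarith
          _ ≤ (3 * (σ * K) ^ 2 + (2 + σ * K)) * |ξ| ^ p := by
            have h6 : (0:ℝ) ≤ 3 * (σ * K) ^ 2 * (|ξ| ^ p) := by positivity
            rw [add_mul, add_mul]
            linarith
    rw [hsplit, hf2val, hchar]
    have hrearr : (∫ x : ℝ, (Complex.exp (Complex.I * x * ξ) - 1 - Complex.I * x * ξ) *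
          ((g x - γ x : ℝ) : ℂ)) + (0 + Complex.exp (-z)) - 1 + z
        = (∫ x : ℝ, (Complex.exp (Complex.I * x * ξ) - 1 - Complex.I * x * ξ) *
          ((g x - γ x : ℝ) : ℂ)) + (Complex.exp (-z) - 1 + z) := by ring
    rw [hrearr]
    have h5 : (0:ℝ) ≤ |ξ| ^ p := Real.rpow_nonneg (abs_nonneg ξ) p
    calc ‖(∫ x : ℝ, (Complex.exp (Complex.I * x * ξ) - 1 - Complex.I * x * ξ) *
          ((g x - γ x : ℝ) : ℂ)) + (Complex.exp (-z) - 1 + z)‖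
        ≤ ‖∫ x : ℝ, (Complex.exp (Complex.I * x * ξ) - 1 - Complex.I * x * ξ) *
          ((g x - γ x : ℝ) : ℂ)‖ + ‖Complex.exp (-z) - 1 + z‖ := norm_add_le _ _
      _ ≤ 3 * |ξ| ^ p * A + (3 * (σ * K) ^ 2 + (2 + σ * K)) * |ξ| ^ p := by
          linarith [hf1bound, hsecond]
      _ ≤ (3 * A + 3 * (σ * K) ^ 2 + (2 + σ * K) + 1) * |ξ| ^ p := by
          have h6 : (0:ℝ) ≤ 1 * (|ξ| ^ p) := by positivity
          have h7 : 3 * |ξ| ^ p * A = 3 * A * (|ξ| ^ p) := by ring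
          rw [add_mul, add_mul, add_mul]
          linarith
end
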